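/- arXiv:1705.07802 — 2 statements merged into one kernel-verified Lean document; each statement's English description precedes it below -/
import Mathlib

section
/- Let Q be a quasi-order and A: ω^ω → Q. If F(A) is nonempty, then the restriction A↾F(A) is initializable, i.e., for every σ ∈ ω^{<ω} extendible in F(A) there is a continuous θ: F(A) → F(A) ∩ [σ] with A(X) ≤_Q A(θ(X)) for all X ∈ F(A). Furthermore, if A is Q-Wadge equivalent to an initializable function (one satisfying B ≤_w B↾[σ] for every σ ∈ ω^{<ω}), then A ≡_w A↾F(A). -/
/-!
Common definitions for formalizing "On the structure of the Wadge degrees of bqo-valued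
Borel functions" by Kihara and Montalbán.
-/

open scoped Classical
noncomputable section

namespace WadgeStudy

/-! ### Baire space `ω^ω` -/

/-- Baire space `ω^ω`: the product of countably many copies of discrete `ω`. -/
abbrev Baire : Type := ℕ → ℕ

/-- The basic clopen set `[σ]` of all infinite sequences extending the finite string `σ`. -/
def cylB (σ : List ℕ) : Set Baire := {X | ∀ i : Fin σ.length, X i = σ.get i}

/-- The finite initial segment `X↾n` of `X ∈ ω^ω`. -/
def initSeg (X : Baire) (n : ℕ) : List ℕ := List.ofFn fun i : Fin n => X i

/-- Concatenation `σ⌢X` of a finite string and an infinite sequence. -/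
def appendStr (σ : List ℕ) (X : Baire) : Baire := fun i =>
  if h : i < σ.length then σ.get ⟨i, h⟩ else X (i - σ.length)

/-! ### The Borel hierarchy -/

/-- The Borel hierarchy: `Σ⁰₁` sets are the open sets; for `α > 1`, a set is `Σ⁰_α` if it is
a countable union of sets each of which is `Π⁰_β` (i.e. has `Σ⁰_β` complement) for some
`β < α`. -/
inductive SigmaZero (X : Type*) [TopologicalSpace X] : Ordinal.{0} → Set X → Prop
  | of_isOpen {s : Set X} : IsOpen s → SigmaZero X 1 s
  | iUnion {α : Ordinal} (hα : 1 < α) (f : ℕ → Set X) (β : ℕ → Ordinal)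
      (hβ : ∀ n, β n < α) (hf : ∀ n, SigmaZero X (β n) (f n)ᶜ) :
      SigmaZero X α (⋃ n, f n)

/-- `Π⁰_α` sets are the complements of `Σ⁰_α` sets. -/
def PiZero (X : Type*) [TopologicalSpace X] (α : Ordinal.{0}) (s : Set X) : Prop :=
  SigmaZero X α sᶜ

/-- `Δ⁰_α = Σ⁰_α ∩ Π⁰_α`. -/
def DeltaZero (X : Type*) [TopologicalSpace X] (α : Ordinal.{0}) (s : Set X) : Prop :=
  SigmaZero X α s ∧ PiZero X α s

/-- A countable ordinal. -/
def IsCountableOrd (ξ : Ordinal.{0}) : Prop := ξ.card ≤ Cardinal.aleph0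

/-- `A : X → Q` (with `Q` carrying the discrete topology) is `Δ⁰_ξ`-measurable iff its range is
countable and every fiber is `Δ⁰_ξ`. -/
def DeltaMeasurable {X : Type*} [TopologicalSpace X] {Q : Type*} (ξ : Ordinal.{0}) (A : X → Q) :
    Prop :=
  (Set.range A).Countable ∧ ∀ q : Q, DeltaZero X ξ (A ⁻¹' {q})

/-- A function into Baire space is `Σ⁰_ξ`-measurable if the preimage of every basic clopen set
is `Σ⁰_ξ`. -/
def SigmaMeasurable {X : Type*} [TopologicalSpace X] (ξ : Ordinal.{0}) (D : X → Baire) : Prop :=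
  ∀ σ : List ℕ, SigmaZero X ξ (D ⁻¹' cylB σ)

/-- A `Q`-valued function is Borel if it is `Δ⁰_ξ`-measurable for some countable ordinal `ξ`. -/
def BorelMeasurable {X : Type*} [TopologicalSpace X] {Q : Type*} (A : X → Q) : Prop :=
  ∃ ξ : Ordinal.{0}, IsCountableOrd ξ ∧ DeltaMeasurable ξ A

/-! ### Wadge reducibility of `Q`-valued functions -/

/-- `Q`-Wadge reducibility: `A ≤_w B` iff there is a continuous `θ` from the domain of `A` to
the domain of `B` with `A X ≤_Q B (θ X)` for all `X`. -/
def WadgeLE {X Y : Type*} [TopologicalSpace X] [TopologicalSpace Y] {Q : Type*} [Preorder Q]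
    (A : X → Q) (B : Y → Q) : Prop :=
  ∃ θ : X → Y, Continuous θ ∧ ∀ x, A x ≤ B (θ x)

/-- `Q`-Wadge equivalence. -/
def WadgeEquiv {X Y : Type*} [TopologicalSpace X] [TopologicalSpace Y] {Q : Type*} [Preorder Q]
    (A : X → Q) (B : Y → Q) : Prop :=
  WadgeLE A B ∧ WadgeLE B A

/-- `A` is self-dual if there is a continuous `θ` with `A (θ X) ≰_Q A X` for all `X`. -/
def SelfDual {Q : Type*} [Preorder Q] (A : Baire → Q) : Prop :=
  ∃ θ : Baire → Baire, Continuous θ ∧ ∀ X, ¬ A (θ X) ≤ A X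

/-- The function `A↾[σ] : X ↦ A (σ⌢X)`. -/
def restrictCyl {Q : Type*} (A : Baire → Q) (σ : List ℕ) : Baire → Q :=
  fun X => A (appendStr σ X)

/-- `A` is initializable if `A ≤_w A↾[σ]` for every finite string `σ`. -/
def Initializable {Q : Type*} [Preorder Q] (A : Baire → Q) : Prop :=
  ∀ σ : List ℕ, WadgeLE A (restrictCyl A σ)

/-- `F(A) = {X : ∀ n, A↾[X↾n] ≡_w A}`. -/
def FSet {Q : Type*} [Preorder Q] (A : Baire → Q) : Set Baire :=
  {X | ∀ n : ℕ, WadgeEquiv (restrictCyl A (initSeg X n)) A}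

/-- The countable join `⊕_n A_n`, defined by `(⊕_n A_n)(n⌢X) = A_n X`. -/
def oplus {Q : Type*} (A : ℕ → Baire → Q) : Baire → Q :=
  fun X => A (X 0) fun n => X (n + 1)

/-- A Borel function `A` is σ-join-reducible if its `Q`-Wadge degree is the least upper bound
of a countable collection of `Q`-Wadge degrees (of Borel functions) each strictly below it. -/
def SigmaJoinReducible {Q : Type*} [Preorder Q] (A : Baire → Q) : Prop :=
  ∃ B : ℕ → Baire → Q,
    (∀ n, BorelMeasurable (B n)) ∧
    (∀ n, WadgeLE (B n) A ∧ ¬ WadgeLE A (B n)) ∧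
    ∀ C : Baire → Q, BorelMeasurable C → (∀ n, WadgeLE (B n) C) → WadgeLE A C

/-! ### Better quasi-orders -/

/-- Removing the first entry of a strictly increasing sequence. -/
def dropMin (X : {X : Baire // StrictMono X}) : {X : Baire // StrictMono X} :=
  ⟨fun n => X.1 (n + 1), fun _ _ h => X.2 (Nat.add_lt_add_right h 1)⟩

/-- A quasi-order `Q` is a better-quasi-order if for every continuous `f : [ω]^ω → Q` (where
`Q` is discrete and `[ω]^ω ⊆ ω^ω` is the subspace of strictly increasing sequences) there is
`X` with `f X ≤_Q f X⁻`. -/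
def IsBQO (Q : Type*) [Preorder Q] : Prop :=
  ∀ f : {X : Baire // StrictMono X} → Q,
    @Continuous _ _ _ ⊥ f → ∃ X, f X ≤ f (dropMin X)

/-! ### Terms: nested labeled trees and forests -/

/-- `L(Q)`-terms: constants `q ∈ Q`, labelings `⟨T⟩^{ω^α}` (with `⟨T⟩ = ⟨T⟩^{ω^0}`),
trees `B → ⊔_i F_i`, and countable disjoint unions `⊔_i F_i`. -/
inductive Term (Q : Type u) : Type (max u 1)
  | const : Q → Term Q
  | jump : Ordinal.{0} → Term Q → Term Q
  | node : Term Q → (ℕ → Term Q) → Term Q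
  | sup : (ℕ → Term Q) → Term Q

/-- `⟨⟩`-type (base) terms: constants and labelings. -/
def IsBase {Q : Type u} : Term Q → Prop
  | Term.const _ => True
  | Term.jump _ _ => True
  | _ => False

/-- A rank function on terms, used to define the quasi-order `⊴` by recursion. -/
def rk {Q : Type u} : Term Q → Ordinal.{0}
  | .const _ => 0
  | .jump _ T => rk T + 1
  | .node B F => max (rk B) (Ordinal.lsub fun i => rk (F i)) + 1
  | .sup F => Ordinal.lsub (fun i => rk (F i)) + 1

theorem ord_lt_add_one (a : Ordinal.{0}) : a < a + 1 := by
  rw [Ordinal.add_one_eq_succ]; exact Order.lt_succ a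

theorem rk_lt_jump {Q : Type u} (α : Ordinal.{0}) (T : Term Q) : rk T < rk (.jump α T) :=
  ord_lt_add_one (rk T)

theorem rk_base_lt_node {Q : Type u} (B : Term Q) (F : ℕ → Term Q) :
    rk B < rk (.node B F) :=
  lt_of_le_of_lt (le_max_left _ _) (ord_lt_add_one _)

theorem rk_child_lt_node {Q : Type u} (B : Term Q) (F : ℕ → Term Q) (i : ℕ) :
    rk (F i) < rk (.node B F) :=
  lt_of_lt_of_le (Ordinal.lt_lsub _ i) (le_trans (le_max_right _ _) (le_of_lt (ord_lt_add_one _)))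

theorem rk_child_lt_sup {Q : Type u} (F : ℕ → Term Q) (i : ℕ) :
    rk (F i) < rk (.sup F) :=
  lt_of_lt_of_le (Ordinal.lt_lsub _ i) (le_of_lt (ord_lt_add_one _))

/-- The quasi-order `⊴` on terms, defined by simultaneous recursion.  A constant `q` is
identified with `⟨q⟩` (so a constant compares with a labeled term by unravelling the label)
and a `⟨⟩`-type term `B` is identified with `B → (empty forest)`, the empty forest being
`⊴`-below everything.  The clauses are:
* `p ⊴ q` iff `p ≤_Q q`;
* `⟨U⟩^{ω^α} ⊴ ⟨V⟩^{ω^β}` iff `U ⊴ V` when `α = β`, iff `⟨U⟩^{ω^α} ⊴ V` when `α > β`, and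
  iff `U ⊴ ⟨V⟩^{ω^β}` when `α < β`;
* for `S = B→⊔_i S_i` and `T = C→⊔_j T_j`: `S ⊴ T` iff either (`B ⊴ C` and `S_i ⊴ T` for
  all `i`), or (`B ⋬ C` and `S ⊴ T_j` for some `j`);
* `⊔` is interpreted as countable supremum: `⊔_i S_i ⊴ ⊔_j T_j` iff every `S_i` is `⊴` some
  `T_j`. -/
def TermLE {Q : Type u} [Preorder Q] : Term Q → Term Q → Prop
  | .const p, .const q => p ≤ q
  | .const p, .jump _ V => TermLE (.const p) V
  | .const p, .node C G =>
      (TermLE (.const p) C) ∨ (¬ TermLE (.const p) C ∧ ∃ j, TermLE (.const p) (G j))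
  | .const p, .sup G => ∃ j, TermLE (.const p) (G j)
  | .jump _ U, .const q => TermLE U (.const q)
  | .jump α U, .jump β V =>
      if α = β then TermLE U V
      else if β < α then TermLE (.jump α U) V
      else TermLE U (.jump β V)
  | .jump α U, .node C G =>
      (TermLE (.jump α U) C) ∨ (¬ TermLE (.jump α U) C ∧ ∃ j, TermLE (.jump α U) (G j))
  | .jump α U, .sup G => ∃ j, TermLE (.jump α U) (G j)
  | .node B F, .const q => TermLE B (.const q) ∧ ∀ i, TermLE (F i) (.const q)
  | .node B F, .jump β V => TermLE B (.jump β V) ∧ ∀ i, TermLE (F i) (.jump β V)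
  | .node B F, .node C G =>
      (TermLE B C ∧ ∀ i, TermLE (F i) (.node C G)) ∨
      (¬ TermLE B C ∧ ∃ j, TermLE (.node B F) (G j))
  | .node B F, .sup G => ∃ j, TermLE (.node B F) (G j)
  | .sup F, .const q => ∀ i, TermLE (F i) (.const q)
  | .sup F, .jump β V => ∀ i, TermLE (F i) (.jump β V)
  | .sup F, .node C G => ∀ i, TermLE (F i) (.node C G)
  | .sup F, .sup G => ∀ i, ∃ j, TermLE (F i) (G j)
termination_by S T => (rk S, rk T)
decreasing_by
  all_goals
    first
      | exact Prod.Lex.left _ _ (rk_lt_jump _ _)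
      | exact Prod.Lex.left _ _ (rk_base_lt_node _ _)
      | exact Prod.Lex.left _ _ (rk_child_lt_node _ _ _)
      | exact Prod.Lex.left _ _ (rk_child_lt_sup _ _)
      | exact Prod.Lex.right _ (rk_lt_jump _ _)
      | exact Prod.Lex.right _ (rk_base_lt_node _ _)
      | exact Prod.Lex.right _ (rk_child_lt_node _ _ _)
      | exact Prod.Lex.right _ (rk_child_lt_sup _ _)

/-- `S ≡ T`: `S ⊴ T` and `T ⊴ S`. -/
def TermEquiv {Q : Type u} [Preorder Q] (S T : Term Q) : Prop := TermLE S T ∧ TermLE T S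

/-- `Tree^n(Q)` for finite `n`: `Tree⁰(Q) = Q` and `Tree^{n+1}(Q) = Tree(Tree^n(Q))`, where
`Tree(Q')` consists of the one point trees `⟨q'⟩` and the trees `⟨q'⟩ → ⊔_i T_i` for
`q' ∈ Q'` and trees `T_i ∈ Tree(Q')`. -/
inductive IsTreeN {Q : Type u} : ℕ → Term Q → Prop
  | const (q : Q) : IsTreeN 0 (.const q)
  | leaf {n : ℕ} {T : Term Q} : IsTreeN n T → IsTreeN (n + 1) (.jump 0 T)
  | node {n : ℕ} {T : Term Q} {F : ℕ → Term Q} :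
      IsTreeN n T → (∀ i, IsTreeN (n + 1) (F i)) → IsTreeN (n + 1) (.node (.jump 0 T) F)

/-- `⊔Tree^n(Q)`: trees in `Tree^n(Q)` and countable disjoint unions of such trees. -/
def IsForestN {Q : Type u} (n : ℕ) (T : Term Q) : Prop :=
  IsTreeN n T ∨ ∃ F : ℕ → Term Q, T = .sup F ∧ ∀ i, IsTreeN n (F i)

/-- The exponent `α` in the normal form `ξ = ω^α + β`, `β < ω^{α+1}`. -/
def olog (ξ : Ordinal.{0}) : Ordinal.{0} := Ordinal.log Ordinal.omega0 ξ

/-- The remainder `β` in the normal form `ξ = ω^α + β`, `β < ω^{α+1}`. -/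
def obeta (ξ : Ordinal.{0}) : Ordinal.{0} := ξ - Ordinal.omega0 ^ olog ξ

/-- `Tree^ξ(Q)` for an ordinal `ξ`: writing `ξ = ω^α + β` with `β < ω^{α+1}`, one has
`Tree^ξ(Q) = Tree^{ω^α}(⟨Tree^β(Q)⟩^{ω^α})` (with `Tree⁰(Q) = Q`), where `Tree^{ω^α}(Q')` is
generated from the constants `q' ∈ Q'` (which are `⟨⟩`-type) by the labelings `⟨T⟩^{ω^γ}` for
`γ < α` (also `⟨⟩`-type) and by `T → ⊔_i F_i` for `⟨⟩`-type `T` and trees `F_i`. -/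
inductive IsTreeXi {Q : Type u} : Ordinal.{0} → Term Q → Prop
  | const {ξ : Ordinal.{0}} (q : Q) (h : obeta ξ = 0) : IsTreeXi ξ (Term.const q)
  | atom {ξ : Ordinal.{0}} {S : Term Q} (h : obeta ξ ≠ 0) (hS : IsTreeXi (obeta ξ) S) :
      IsTreeXi ξ (Term.jump (olog ξ) S)
  | jump {ξ β : Ordinal.{0}} {T : Term Q} (h0 : ξ ≠ 0) (hβ : β < olog ξ) (hT : IsTreeXi ξ T) :
      IsTreeXi ξ (Term.jump β T)
  | node {ξ : Ordinal.{0}} {B : Term Q} {F : ℕ → Term Q} (h0 : ξ ≠ 0) (hB : IsTreeXi ξ B)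
      (hbase : IsBase B) (hF : ∀ i, IsTreeXi ξ (F i)) : IsTreeXi ξ (Term.node B F)

/-- `⊔Tree^ξ(Q)`: trees in `Tree^ξ(Q)` and countable disjoint unions of such trees. -/
def IsForestXi {Q : Type u} (ξ : Ordinal.{0}) (T : Term Q) : Prop :=
  IsTreeXi ξ T ∨ ∃ F : ℕ → Term Q, T = .sup F ∧ ∀ i, IsTreeXi ξ (F i)

/-- The `k`-fold labeling `⟨⟨…⟨T⟩…⟩⟩`. -/
def labelIter {Q : Type u} : ℕ → Term Q → Term Q
  | 0, T => T
  | k + 1, T => .jump 0 (labelIter k T)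

/-- `ι(T) = T[⟨q⟩^k / q]`: replace every occurrence of a constant `q` in `T` by `⟨q⟩^k`. -/
def iotaSubst {Q : Type u} (k : ℕ) : Term Q → Term Q
  | .const q => labelIter k (.const q)
  | .jump α T => .jump α (iotaSubst k T)
  | .node B F => .node (iotaSubst k B) fun i => iotaSubst k (F i)
  | .sup F => .sup fun i => iotaSubst k (F i)

/-! ### The pointclasses `Σ_T` -/

/-- `Σ⁰_ξ`-measurability of a Baire-space valued map on the subspace `D ⊆ ω^ω`. -/
def SigmaMeasurableOn (ξ : Ordinal.{0}) (D : Set Baire) (f : Baire → Baire) : Prop :=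
  ∀ σ : List ℕ, SigmaZero (↥D) ξ ((fun x : ↥D => f x.1) ⁻¹' cylB σ)

/-- The pointclass `Σ_T` of `Q`-valued functions associated to a term `T`, relativized to a
domain `D ⊆ ω^ω` (a function defined on a nonempty closed or open subset of `ω^ω` is
identified with the corresponding total function; `SigmaT T D A` expresses `A↾D ∈ Σ_T`):
* `Σ_q` consists only of the constant function `q`;
* `A ∈ Σ_{⊔_i S_i}` iff there is a partition of the domain into relatively clopen sets `C_i`
  with `A↾C_i ∈ Σ_{S_i}` for all `i`;
* `A ∈ Σ_{T→S}` (`S = ⊔_i F_i`) iff there is a relatively open set `V` with `A↾(D∖V) ∈ Σ_T`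
  and `A↾(D∩V) ∈ Σ_S`;
* `A ∈ Σ_{⟨T⟩^{ω^α}}` iff `A = B ∘ D'` for some `Σ⁰_{1+ω^α}`-measurable `D' : ω^ω → ω^ω` and
  some `B ∈ Σ_T` (for `α = 0` this is the clause for the jump `Σ_{⟨T⟩}`, with a
  `Σ⁰₂`-measurable `D'`). -/
inductive SigmaT {Q : Type u} : Term Q → Set Baire → (Baire → Q) → Prop
  | const (q : Q) (D : Set Baire) (A : Baire → Q) (h : ∀ x ∈ D, A x = q) :
      SigmaT (Term.const q) D A
  | sup (S : ℕ → Term Q) (D : Set Baire) (A : Baire → Q) (C : ℕ → Set Baire)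
      (hcl : ∀ i, IsClopen ((fun x : ↥D => x.1) ⁻¹' C i))
      (hpart : ∀ x ∈ D, ∃! i, x ∈ C i)
      (h : ∀ i, SigmaT (S i) (D ∩ C i) A) :
      SigmaT (Term.sup S) D A
  | node (B : Term Q) (F : ℕ → Term Q) (D : Set Baire) (A : Baire → Q) (V : Set Baire)
      (hV : IsOpen ((fun x : ↥D => x.1) ⁻¹' V))
      (h1 : SigmaT B (D \ V) A)
      (h2 : SigmaT (Term.sup F) (D ∩ V) A) :
      SigmaT (Term.node B F) D A
  | jump (α : Ordinal.{0}) (T : Term Q) (D : Set Baire) (A : Baire → Q)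
      (D' : Baire → Baire) (B : Baire → Q)
      (hD : SigmaMeasurableOn (1 + Ordinal.omega0 ^ α) D D')
      (hB : SigmaT T Set.univ B)
      (hA : ∀ x ∈ D, A x = B (D' x)) :
      SigmaT (Term.jump α T) D A

/-- A total function is in `Σ_T` if it is so on the whole space. -/
def MemSigmaT {Q : Type u} (T : Term Q) (A : Baire → Q) : Prop := SigmaT T Set.univ A

/-- `Ω` is `Σ_T`-complete: `Ω ∈ Σ_T` and every function in `Σ_T` is Wadge reducible to `Ω`. -/
def SigmaTComplete {Q : Type u} [Preorder Q] (T : Term Q) (Ω : Baire → Q) : Prop :=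
  MemSigmaT T Ω ∧ ∀ A : Baire → Q, MemSigmaT T A → WadgeLE A Ω

/-! ### `ω̂ = ω ∪ {pass}`, conciliatory functions -/

/-- `ω̂ = ω ∪ {pass}`; `none` plays the role of the symbol `pass`. -/
abbrev Hat : Type := Option ℕ

instance : TopologicalSpace Hat := ⊥
instance : DiscreteTopology Hat := ⟨rfl⟩
instance : TopologicalSpace (Option Hat) := ⊥
instance : DiscreteTopology (Option Hat) := ⟨rfl⟩

/-- `ω̂^ω`, with the product topology of the discrete space `ω̂`. -/
abbrev HatBaire : Type := ℕ → Hat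

/-- Basic clopen subsets of `ω̂^ω`. -/
def cylH (σ : List Hat) : Set HatBaire := {X | ∀ i : Fin σ.length, X i = σ.get i}

/-- The index of the `k`-th non-`pass` entry of `X ∈ ω̂^ω`, if it exists. -/
def nthSome (X : HatBaire) : ℕ → Option ℕ
  | 0 => if h : ∃ i, (X i).isSome then some (Nat.find h) else none
  | k + 1 =>
    match nthSome X k with
    | none => none
    | some i => if h : ∃ j, i < j ∧ (X j).isSome then some (Nat.find h) else none

theorem nthSome_isSome (X : HatBaire) : ∀ k i, nthSome X k = some i → (X i).isSome := by
  intro k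
  induction k with
  | zero =>
    intro i h
    simp only [nthSome] at h
    split at h
    · rename_i hex
      cases h
      exact Nat.find_spec hex
    · exact absurd h (by simp)
  | succ k ih =>
    intro i h
    simp only [nthSome] at h
    split at h
    · exact absurd h (by simp)
    · rename_i j hj
      split at h
      · rename_i hex
        cases h
        exact (Nat.find_spec hex).2
      · exact absurd h (by simp)

theorem nthSome_succ_none {X : HatBaire} {k : ℕ} (h : nthSome X k = none) :
    nthSome X (k + 1) = none := by
  simp only [nthSome, h]

/-- `X^p ∈ ω^{≤ω}`: the finite or infinite sequence obtained from `X ∈ ω̂^ω` by deleting all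
occurrences of `pass`. -/
def strip (X : HatBaire) : Stream'.Seq ℕ :=
  ⟨fun k => (nthSome X k).bind fun i => X i, by
    intro n h
    have hn : nthSome X n = none := by
      cases hh : nthSome X n with
      | none => rfl
      | some i =>
        exfalso
        have h1 := nthSome_isSome X n i hh
        replace h : (nthSome X n).bind (fun i => X i) = none := h
        rw [hh, Option.bind_some] at h
        rw [h] at h1
        simp at h1
    show (nthSome X (n + 1)).bind _ = none
    rw [nthSome_succ_none hn, Option.bind_none]⟩

/-- The natural inclusion `ω^ω ⊆ ω^{≤ω}`. -/
def ofBaire (X : Baire) : Stream'.Seq ℕ :=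
  ⟨fun n => some (X n), by intro n h; simp at h⟩

/-- The natural inclusion `ω^{<ω} ⊆ ω^{≤ω}`. -/
def ofList (σ : List ℕ) : Stream'.Seq ℕ := Stream'.Seq.ofList σ

/-- The initial segment (prefix) relation on `ω^{≤ω}`. -/
def SeqPrefix (σ τ : Stream'.Seq ℕ) : Prop :=
  ∀ n a, σ.get? n = some a → τ.get? n = some a

/-- A `Q`-valued function on `ω̂^ω` is conciliatory if its value depends only on the
pass-deleted input: `X^p = Y^p → A(X) = A(Y)`. -/
def ConciliatoryQ {Q : Type*} (A : HatBaire → Q) : Prop :=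
  ∀ X Y, strip X = strip Y → A X = A Y

/-- `Ψ : ω̂^ω → ω̂^ω` is conciliatory if `X^p = Y^p` implies `Ψ(X)^p = Ψ(Y)^p`. -/
def ConciliatoryF (Ψ : HatBaire → HatBaire) : Prop :=
  ∀ X Y, strip X = strip Y → strip (Ψ X) = strip (Ψ Y)

/-- `Ψ ≡_p Φ`: `Ψ(X)^p = Φ(X)^p` for all `X`. -/
def PEquiv (Ψ Φ : HatBaire → HatBaire) : Prop := ∀ X, strip (Ψ X) = strip (Φ X)

/-- `Σ⁰_ξ`-measurability for self-maps of `ω̂^ω`. -/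
def SigmaMeasurableH (ξ : Ordinal.{0}) (Ψ : HatBaire → HatBaire) : Prop :=
  ∀ σ : List Hat, SigmaZero HatBaire ξ (Ψ ⁻¹' cylH σ)

/-- A conciliatory `U` is `Σ⁰_ξ`-universal if it is `Σ⁰_ξ`-measurable and every
`Σ⁰_ξ`-measurable conciliatory `G` satisfies `G ≡_p U ∘ θ` for some continuous `θ`. -/
def SigmaUniversal (ξ : Ordinal.{0}) (U : HatBaire → HatBaire) : Prop :=
  SigmaMeasurableH ξ U ∧
    ∀ G : HatBaire → HatBaire, ConciliatoryF G → SigmaMeasurableH ξ G →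
      ∃ θ : HatBaire → HatBaire, Continuous θ ∧ PEquiv G (U ∘ θ)

/-- `Ψ` is initializable if for every `τ ∈ ω̂^{<ω}` there is a continuous `θ_τ : ω̂^ω → [τ]`
with `Ψ ≡_p Ψ ∘ θ_τ`. -/
def InitializableH (Ψ : HatBaire → HatBaire) : Prop :=
  ∀ τ : List Hat, ∃ θ : HatBaire → HatBaire,
    Continuous θ ∧ (∀ X, θ X ∈ cylH τ) ∧ PEquiv Ψ (Ψ ∘ θ)

/-! ### The mind-change coding -/

/-- `ω̂^{≤ω}`: finite or infinite sequences over `ω̂` (the value `none` of the outer `Option`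
means "beyond the length of the sequence"). -/
abbrev HatSeq : Type := {Y : ℕ → Option Hat // ∀ n, Y n = none → Y (n + 1) = none}

/-- The pass-deleted sequence `Y^p ∈ ω^{≤ω}` of `Y ∈ ω̂^{≤ω}`. -/
def stripHS (Y : HatSeq) : Stream'.Seq ℕ := strip fun n => (Y.1 n).join

/-- The mind-change coding `Y → Z` for `Y ∈ ω̂^{≤ω}` of length `ℓ` and `Z ∈ ω̂^ω`:
`(Y→Z)(n) = 2·Y(n)` if `n < ℓ` and `Y(n) ≠ pass`; `pass` if `n < ℓ` and `Y(n) = pass`;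
`2·Z(0)+1` if `n = ℓ`; and `Z(n−ℓ)` if `n > ℓ`.  When `Y` is infinite or `Z^p` is empty,
`Y→Z` is `Y` with each non-pass entry doubled (padded with passes). -/
def arrowSeq (Y : HatSeq) (Z : HatBaire) : HatBaire := fun n =>
  match Y.1 n with
  | some (some k) => some (2 * k)
  | some none => none
  | none =>
    if ∀ m, Z m = none then none
    else if n = sInf {m | Y.1 m = none} then (Z 0).map fun z => 2 * z + 1
    else Z (n - sInf {m | Y.1 m = none})

/-- The canonical `π₀`: the part of `X` before the first mind change, with all entries halved
(and passes from the first mind change on). -/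
def pi0 (X : HatBaire) : HatBaire := fun n =>
  if ∃ m ≤ n, ∃ k, X m = some (2 * k + 1) then none
  else (X n).map fun k => k / 2

/-- The canonical `π₁`: the decoded part of `X` from the first mind change on (and all passes
if no mind change ever occurs). -/
def pi1 (X : HatBaire) : HatBaire := fun n =>
  if ∃ m, ∃ k, X m = some (2 * k + 1) then
    if n = 0 then (X (sInf {m | ∃ k, X m = some (2 * k + 1)})).map fun k => k / 2
    else X (sInf {m | ∃ k, X m = some (2 * k + 1)} + n)
  else none

/-- The mind-change operation on functions:
`(A→B)(X) = A(π₀ X)` if `π₁(X)^p` is empty, and `B(π₁ X)` otherwise. -/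
def mcArrow {Q : Type*} (A B : HatBaire → Q) : HatBaire → Q := fun X =>
  if ∀ n, pi1 X n = none then A (pi0 X) else B (pi1 X)

/-- The `Σ_T`-complete functions `Ω_T`, relative to a fixed `Σ⁰₂`-universal initializable
conciliatory function `𝒰`:
* `Ω_{⟨q⟩}` is the constant function with value `q` (equivalently `Ω_q ∘ 𝒰`);
* `Ω_{⟨S⟩} = Ω_S ∘ 𝒰`;
* `Ω_{⟨S⟩→F} = Ω_{⟨S⟩} → Ω_F`: the value is `Ω_{⟨S⟩}(π₀ X)` if no mind change occurs in `X`,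
  and `Ω_F(π₁ X)` otherwise (where `Ω_F(n⌢X') = Ω_{F_n}(X')`);
* `Ω_{⊔_n T_n}(n⌢X) = Ω_{T_n}(X)`. -/
def Omega {Q : Type u} (U : HatBaire → HatBaire) : Term Q → HatBaire → Q
  | .const q => fun _ => q
  | .jump _ T => fun X => Omega U T (U X)
  | .node B F => fun X =>
      if ∀ n, pi1 X n = none then Omega U B (pi0 X)
      else Omega U (F ((pi1 X 0).getD 0)) fun n => pi1 X (n + 1)
  | .sup F => fun X => Omega U (F ((X 0).getD 0)) fun n => X (n + 1)

/-- `Ω_T` as a function on `ω × ω̂^ω`: for a `⊔`-type term `⊔_n T_n` this is the function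
`(n, X) ↦ Ω_{T_n}(X)`; a tree is treated as a forest with a single (repeated) component,
i.e. `Ω_T` is composed with the (Wadge-irrelevant) projection. -/
def OmegaC {Q : Type u} (U : HatBaire → HatBaire) (T : Term Q) : ℕ × HatBaire → Q :=
  match T with
  | .sup F => fun p => Omega U (F p.1) p.2
  | t => fun p => Omega U t p.2

theorem wadgeLE_trans {X Y Z : Type*} [TopologicalSpace X] [TopologicalSpace Y]
    [TopologicalSpace Z] {Q : Type*} [Preorder Q] {A : X → Q} {B : Y → Q} {C : Z → Q}
    (h1 : WadgeLE A B) (h2 : WadgeLE B C) : WadgeLE A C := by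
  obtain ⟨θ, hθ, hθle⟩ := h1
  obtain ⟨η, hη, hηle⟩ := h2
  exact ⟨η ∘ θ, hη.comp hθ, fun x => (hθle x).trans (hηle (θ x))⟩

theorem initSeg_length (X : Baire) (n : ℕ) : (initSeg X n).length = n := by
  simp [initSeg]

theorem appendStr_continuous (σ : List ℕ) : Continuous (appendStr σ) := by
  apply continuous_pi
  intro i
  rcases lt_or_ge i σ.length with h | h
  · have : (fun X : Baire => appendStr σ X i) = fun _ => σ.get ⟨i, h⟩ := by
      funext X; exact dif_pos h
    rw [this]; exact continuous_const
  · have : (fun X : Baire => appendStr σ X i) = fun X : Baire => X (i - σ.length) := by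
      funext X; exact dif_neg (not_lt.2 h)
    rw [this]; exact continuous_apply _

theorem appendStr_initSeg (Y : Baire) (m : ℕ) (Z : Baire) (j : ℕ) :
    appendStr (initSeg Y m) Z j = if j < m then Y j else Z (j - m) := by
  have hl : (initSeg Y m).length = m := initSeg_length Y m
  rcases lt_or_ge j m with h | h
  · have h' : j < (initSeg Y m).length := by rw [hl]; exact h
    rw [if_pos h]
    show (if h : j < (initSeg Y m).length then (initSeg Y m).get ⟨j, h⟩
        else Z (j - (initSeg Y m).length)) = Y j
    rw [dif_pos h']
    simp [initSeg]
  · have h' : ¬ j < (initSeg Y m).length := by rw [hl]; exact not_lt.2 h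
    rw [if_neg (not_lt.2 h)]
    show (if h : j < (initSeg Y m).length then (initSeg Y m).get ⟨j, h⟩
        else Z (j - (initSeg Y m).length)) = Z (j - m)
    rw [dif_neg h', hl]

theorem appendStr_mem_cylB (σ : List ℕ) (Z : Baire) : appendStr σ Z ∈ cylB σ := by
  intro i
  show (if h : (i : ℕ) < σ.length then σ.get ⟨i, h⟩ else Z (i - σ.length)) = σ.get i
  rw [dif_pos i.isLt]

theorem initSeg_eq_of_mem_cylB {X : Baire} {σ : List ℕ} (h : X ∈ cylB σ) :
    initSeg X σ.length = σ := by
  apply List.ext_get (initSeg_length X σ.length)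
  intro n h1 h2
  have := h ⟨n, h2⟩
  simp [initSeg]
  exact this

theorem restrictCyl_le {Q : Type*} [Preorder Q] (A : Baire → Q) (σ : List ℕ) :
    WadgeLE (restrictCyl A σ) A :=
  ⟨appendStr σ, appendStr_continuous σ, fun _ => le_refl _⟩

theorem mem_FSet_iff {Q : Type*} [Preorder Q] (A : Baire → Q) (X : Baire) :
    X ∈ FSet A ↔ ∀ n : ℕ, WadgeLE A (restrictCyl A (initSeg X n)) := by
  constructor
  · exact fun h n => (h n).2
  · exact fun h n => ⟨restrictCyl_le A _, h n⟩

theorem transfer {Q : Type*} [Preorder Q] (C A : Baire → Q) (f : Baire → Baire)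
    (hf : Continuous f) (hle : ∀ Z, C Z ≤ A (f Z)) (X : Baire) (m : ℕ) :
    ∃ n : ℕ, WadgeLE (restrictCyl C (initSeg X n)) (restrictCyl A (initSeg (f X) m)) := by
  set U : Set Baire := ⋂ i ∈ Finset.range m, (fun Z : Baire => Z i) ⁻¹' {f X i} with hU
  have hUopen : IsOpen U :=
    isOpen_biInter_finset fun i _ => (continuous_apply i).isOpen_preimage _ (isOpen_discrete _)
  have hXU : X ∈ f ⁻¹' U := by simp [hU]
  obtain ⟨I, u, hIu, hsub⟩ := isOpen_pi_iff.1 (hUopen.preimage hf) X hXU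
  refine ⟨I.sup id + 1, ?_⟩
  set n := I.sup id + 1 with hn
  have hkey : ∀ W : Baire, ∀ i, i < m → f (appendStr (initSeg X n) W) i = f X i := by
    intro W
    have hmem : appendStr (initSeg X n) W ∈ f ⁻¹' U := by
      apply hsub
      rw [Set.mem_pi]
      intro a haI
      have ha : a < n := Nat.lt_succ_of_le (Finset.le_sup (f := id) (Finset.mem_coe.1 haI))
      have hXa : appendStr (initSeg X n) W a = X a := by
        rw [appendStr_initSeg]; exact if_pos ha
      rw [hXa]
      exact (hIu a (Finset.mem_coe.1 haI)).2
    intro i him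
    have h2 : ∀ i ∈ Finset.range m, f (appendStr (initSeg X n) W) i = f X i := by
      simpa [hU] using hmem
    exact h2 i (Finset.mem_range.2 him)
  refine ⟨fun W => fun j => f (appendStr (initSeg X n) W) (j + m), ?_, ?_⟩
  · apply continuous_pi
    intro j
    exact (continuous_apply (j + m)).comp (hf.comp (appendStr_continuous _))
  · intro W
    have heq : appendStr (initSeg (f X) m)
        (fun j => f (appendStr (initSeg X n) W) (j + m)) = f (appendStr (initSeg X n) W) := by
      funext j
      rw [appendStr_initSeg]
      split_ifs with h
      · exact (hkey W j h).symm
      · congr 1; omega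
    show C (appendStr (initSeg X n) W) ≤ A (appendStr (initSeg (f X) m) _)
    rw [heq]
    exact hle _

/-- Let `Q` be a quasi-order and `A : ω^ω → Q`.  If `F(A)` is nonempty, then
`A↾F(A)` is initializable: for every `σ ∈ ω^{<ω}` extendible in `F(A)` there is a continuous
`θ : F(A) → F(A) ∩ [σ]` with `A(X) ≤_Q A(θ(X))` for all `X ∈ F(A)`.  Furthermore, if `A` is
`Q`-Wadge equivalent to an initializable function, then `A ≡_w A↾F(A)`. -/
theorem fset_restriction_initializable (Q : Type u) [Preorder Q] (A : Baire → Q) :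
    ((FSet A).Nonempty →
      ∀ σ : List ℕ, (∃ X ∈ FSet A, X ∈ cylB σ) →
        ∃ θ : ↥(FSet A) → ↥(FSet A), Continuous θ ∧ (∀ X, (θ X).1 ∈ cylB σ) ∧
          ∀ X : ↥(FSet A), A X.1 ≤ A (θ X).1) ∧
    ((∃ B : Baire → Q, Initializable B ∧ WadgeEquiv A B) →
      WadgeEquiv A fun X : ↥(FSet A) => A X.1) := by
  constructor
  · rintro - σ ⟨X₀, hX₀F, hX₀σ⟩
    have hσT : WadgeLE A (restrictCyl A σ) := by
      have h1 := (hX₀F σ.length).2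
      rwa [initSeg_eq_of_mem_cylB hX₀σ] at h1
    obtain ⟨g, hg, hgle⟩ := hσT
    set f : Baire → Baire := fun Z => appendStr σ (g Z) with hfdef
    have hfc : Continuous f := (appendStr_continuous σ).comp hg
    have hfle : ∀ Z, A Z ≤ A (f Z) := hgle
    have hmem : ∀ X : Baire, X ∈ FSet A → f X ∈ FSet A := by
      intro X hX
      rw [mem_FSet_iff]
      intro m
      obtain ⟨n, hn⟩ := transfer A A f hfc hfle X m
      exact wadgeLE_trans ((mem_FSet_iff A X).1 hX n) hn
    refine ⟨fun X => ⟨f X.1, hmem X.1 X.2⟩, ?_, ?_, ?_⟩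
    · exact (hfc.comp continuous_subtype_val).subtype_mk _
    · intro X
      exact appendStr_mem_cylB σ (g X.1)
    · intro X
      exact hfle X.1
  · rintro ⟨B, hBinit, hAB, hBA⟩
    constructor
    · obtain ⟨g, hg, hgle⟩ := hAB
      obtain ⟨h, hh, hhle⟩ := hBA
      have hmem : ∀ W : Baire, h W ∈ FSet A := by
        intro W
        rw [mem_FSet_iff]
        intro m
        obtain ⟨n, hn⟩ := transfer B A h hh hhle W m
        exact wadgeLE_trans (wadgeLE_trans ⟨g, hg, hgle⟩ (hBinit (initSeg W n))) hn
      exact ⟨fun Z => ⟨h (g Z), hmem (g Z)⟩, (hh.comp hg).subtype_mk _,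
        fun Z => (hgle Z).trans (hhle (g Z))⟩
    · exact ⟨Subtype.val, continuous_subtype_val, fun _ => le_refl _⟩

end WadgeStudy
end
end

section
/- For every countable ordinal α there exists a conciliatory function U: ω̂^ω → ω̂^ω that is simultaneously Σ⁰_{1+ω^α}-universal and initializable. -/
/-!
Common definitions for formalizing "On the structure of the Wadge degrees of bqo-valued
Borel functions" by Kihara and Montalbán.
-/

open scoped Classical
noncomputable section

namespace WadgeStudy

/-! ### Auxiliary development for Statement 19 -/

namespace KM

/-- Number of non-`pass` entries among the first `i` coordinates. -/
def cnt (Z : HatBaire) : ℕ → ℕ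
  | 0 => 0
  | i + 1 => cnt Z i + if (Z i).isSome then 1 else 0

lemma cnt_mono (Z : HatBaire) : Monotone (cnt Z) := by
  refine monotone_nat_of_le_succ fun n => ?_
  simp only [cnt]; omega

lemma cnt_congr (Z : HatBaire) {a b : ℕ} (hab : a ≤ b)
    (h : ∀ j, a ≤ j → j < b → ¬ (Z j).isSome) : cnt Z b = cnt Z a := by
  induction b with
  | zero => have hz : a = 0 := by omega
            rw [hz]
  | succ b ih =>
    rcases Nat.lt_or_ge a (b+1) with hlt | hge
    · have hab' : a ≤ b := by omega
      have h1 : cnt Z b = cnt Z a := ih hab' (fun j hj hj2 => h j hj (by omega))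
      have h2 : ¬ (Z b).isSome := h b hab' (by omega)
      simp [cnt, h1, h2]
    · have hz : a = b + 1 := by omega
      rw [hz]

lemma isSome_lt_cnt (Z : HatBaire) {j i : ℕ} (hji : j < i) (h : (Z j).isSome) :
    cnt Z j < cnt Z i := by
  have h1 : cnt Z (j+1) = cnt Z j + 1 := by simp [cnt, h]
  have := cnt_mono Z (show j + 1 ≤ i by omega)
  omega

lemma cnt_eq_zero_iff (Z : HatBaire) (i : ℕ) :
    cnt Z i = 0 ↔ ∀ j < i, ¬ (Z j).isSome := by
  constructor
  · intro h j hj hs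
    have := isSome_lt_cnt Z hj hs
    have := cnt_mono Z (Nat.zero_le j)
    omega
  · intro h
    exact cnt_congr Z (Nat.zero_le i) (fun j _ hj => h j hj)

lemma nthSome_eq_some (Z : HatBaire) :
    ∀ k i, nthSome Z k = some i → (Z i).isSome ∧ cnt Z i = k := by
  intro k
  induction k with
  | zero =>
    intro i h
    simp only [nthSome] at h
    split at h
    · rename_i hex
      cases h
      refine ⟨Nat.find_spec hex, ?_⟩
      rw [cnt_eq_zero_iff]
      exact fun j hj => Nat.find_min hex hj
    · exact absurd h (by simp)
  | succ k ih =>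
    intro i h
    simp only [nthSome] at h
    split at h
    · exact absurd h (by simp)
    · rename_i i0 hi0
      split at h
      · rename_i hex
        cases h
        obtain ⟨hlt, hsome⟩ := Nat.find_spec hex
        obtain ⟨hs0, hc0⟩ := ih i0 hi0
        refine ⟨hsome, ?_⟩
        have hgap : ∀ j, i0 + 1 ≤ j → j < Nat.find hex → ¬ (Z j).isSome := by
          intro j h1 h2 hs
          exact Nat.find_min hex h2 ⟨by omega, hs⟩
        have : cnt Z (Nat.find hex) = cnt Z (i0 + 1) :=
          cnt_congr Z (by omega) hgap
        have h2 : cnt Z (i0+1) = cnt Z i0 + 1 := by simp [cnt, hs0]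
        omega
      · exact absurd h (by simp)

lemma nthSome_of_cnt (Z : HatBaire) :
    ∀ i, (Z i).isSome → nthSome Z (cnt Z i) = some i := by
  intro i
  induction i using Nat.strong_induction_on with
  | _ i ih =>
    intro hs
    rcases Nat.eq_zero_or_pos (cnt Z i) with h0 | hpos
    · rw [h0]
      have hex : ∃ j, (Z j).isSome := ⟨i, hs⟩
      simp only [nthSome, dif_pos hex]
      congr 1
      rw [Nat.find_eq_iff]
      exact ⟨hs, fun m hm => (cnt_eq_zero_iff Z i).mp h0 m hm⟩
    · -- there is a largest some-position strictly below i
      have hne : ∃ j, j < i ∧ (Z j).isSome := by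
        by_contra hcon
        push_neg at hcon
        have : cnt Z i = 0 := (cnt_eq_zero_iff Z i).mpr fun j hj => hcon j hj
        omega
      set P : ℕ → Prop := fun j => j < i ∧ (Z j).isSome with hP
      obtain ⟨j0, hj0i, hj0s⟩ := hne
      set j := Nat.findGreatest P i with hj
      have hPj : P j := Nat.findGreatest_spec (m := j0) (by omega) ⟨hj0i, hj0s⟩
      have hgap : ∀ l, j < l → l < i → ¬ (Z l).isSome := by
        intro l h1 h2 hsl
        exact Nat.findGreatest_is_greatest h1 (by omega) ⟨h2, hsl⟩
      have hcnt : cnt Z i = cnt Z j + 1 := by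
        have h1 : cnt Z i = cnt Z (j + 1) :=
          cnt_congr Z (by omega) (fun l hl1 hl2 => hgap l (by omega) hl2)
        have h2 : cnt Z (j+1) = cnt Z j + 1 := by simp [cnt, hPj.2]
        omega
      have hrec := ih j hPj.1 hPj.2
      rw [hcnt]
      simp only [nthSome, hrec]
      have hex : ∃ l, j < l ∧ (Z l).isSome := ⟨i, hPj.1, hs⟩
      rw [dif_pos hex]
      congr 1
      rw [Nat.find_eq_iff]
      refine ⟨⟨hPj.1, hs⟩, fun m hm => ?_⟩
      rintro ⟨hm1, hm2⟩
      exact hgap m hm1 hm hm2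

lemma nthSome_iff (Z : HatBaire) (k i : ℕ) :
    nthSome Z k = some i ↔ (Z i).isSome ∧ cnt Z i = k := by
  constructor
  · exact nthSome_eq_some Z k i
  · rintro ⟨h1, h2⟩
    rw [← h2]
    exact nthSome_of_cnt Z i h1

lemma stripGet (Z : HatBaire) (k : ℕ) :
    (strip Z).get? k = (nthSome Z k).bind fun i => Z i := rfl

lemma stripGet_some_iff (Z : HatBaire) (k v : ℕ) :
    (strip Z).get? k = some v ↔ ∃ i, Z i = some v ∧ cnt Z i = k := by
  rw [stripGet]
  constructor
  · intro h
    rcases hn : nthSome Z k with _ | i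
    · rw [hn] at h; simp at h
    · rw [hn] at h
      simp only [Option.bind_some] at h
      exact ⟨i, h, (nthSome_eq_some Z k i hn).2⟩
  · rintro ⟨i, h1, h2⟩
    have : nthSome Z k = some i := (nthSome_iff Z k i).mpr ⟨by simp [h1], h2⟩
    simp [this, h1]

lemma cnt_total (Z : HatBaire) (h : ∀ i, (Z i).isSome) : ∀ i, cnt Z i = i := by
  intro i
  induction i with
  | zero => rfl
  | succ i ih => simp [cnt, ih, h i]

lemma stripGet_total (Z : HatBaire) (h : ∀ i, (Z i).isSome) (k : ℕ) :
    (strip Z).get? k = Z k := by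
  obtain ⟨v, hv⟩ := Option.isSome_iff_exists.mp (h k)
  rw [hv, stripGet_some_iff]
  exact ⟨k, hv, cnt_total Z h k⟩

/-- strip determines `get?` purely as a function of strip. -/
lemma stripGet_congr {Z Z' : HatBaire} (h : strip Z = strip Z') (k : ℕ) :
    (strip Z).get? k = (strip Z').get? k := by rw [h]

end KM
namespace KM

/-! ### Topology of `HatBaire` -/

lemma isClopen_coord (i : ℕ) (w : Hat) : IsClopen {Z : HatBaire | Z i = w} := by
  have : {Z : HatBaire | Z i = w} = (fun Z : HatBaire => Z i) ⁻¹' {w} := rfl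
  rw [this]
  exact (isClopen_discrete _).preimage (continuous_apply i)

lemma isClopen_isSome (i : ℕ) : IsClopen {Z : HatBaire | (Z i).isSome} := by
  have : {Z : HatBaire | (Z i).isSome} = {Z : HatBaire | Z i = none}ᶜ := by
    ext Z; simp [Option.isSome_iff_ne_none]
  rw [this]
  exact (isClopen_coord i none).compl

lemma isClopen_cnt (i k : ℕ) : IsClopen {Z : HatBaire | cnt Z i = k} := by
  induction i generalizing k with
  | zero =>
    rcases Nat.eq_zero_or_pos k with rfl | hk
    · have : {Z : HatBaire | cnt Z 0 = 0} = Set.univ := by ext Z; simp [cnt]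
      rw [this]; exact isClopen_univ
    · have : {Z : HatBaire | cnt Z 0 = k} = ∅ := by
        ext Z
        simp only [Set.mem_setOf_eq, Set.mem_empty_iff_false, iff_false, cnt]
        omega
      rw [this]; exact isClopen_empty
  | succ i ih =>
    have hdecomp : {Z : HatBaire | cnt Z (i+1) = k} =
        ({Z | cnt Z i = k - 1} ∩ {Z : HatBaire | Z i = none}ᶜ ∩ {Z : HatBaire | 1 ≤ k}) ∪
        ({Z | cnt Z i = k} ∩ {Z : HatBaire | Z i = none}) := by
      ext Z
      by_cases hzi : Z i = none
      · simp [cnt, hzi]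
        all_goals omega
      · have hs : (Z i).isSome = true := Option.isSome_iff_ne_none.mpr hzi
        simp [cnt, hs, hzi]
        omega
    rw [hdecomp]
    have hk : IsClopen {Z : HatBaire | 1 ≤ k} := by
      by_cases h : 1 ≤ k
      · have : {Z : HatBaire | 1 ≤ k} = Set.univ := by ext Z; simp [h]
        rw [this]; exact isClopen_univ
      · have : {Z : HatBaire | 1 ≤ k} = ∅ := by ext Z; simp [h]
        rw [this]; exact isClopen_empty
    exact (((ih (k-1)).inter (isClopen_coord i none).compl).inter hk).union
      ((ih k).inter (isClopen_coord i none))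

lemma isOpen_stripGet_some (k v : ℕ) :
    IsOpen {Z : HatBaire | (strip Z).get? k = some v} := by
  have : {Z : HatBaire | (strip Z).get? k = some v} =
      ⋃ i, ({Z : HatBaire | Z i = some v} ∩ {Z | cnt Z i = k}) := by
    ext Z
    simp only [Set.mem_setOf_eq, Set.mem_iUnion, Set.mem_inter_iff]
    exact stripGet_some_iff Z k v
  rw [this]
  exact isOpen_iUnion fun i => ((isClopen_coord i (some v)).inter (isClopen_cnt i k)).isOpen

lemma isClopen_cylH (σ : List Hat) : IsClopen (cylH σ) := by
  have : cylH σ = ⋂ i : Fin σ.length, {Z : HatBaire | Z i = σ.get i} := by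
    ext Z
    simp only [cylH, Set.mem_setOf_eq, Set.mem_iInter]
  rw [this]
  exact isClopen_iInter_of_finite fun i => isClopen_coord i (σ.get i)

/-- every open subset of `HatBaire` is a countable union of cylinders (or empty sets). -/
lemma open_eq_iUnion_cylH {O : Set HatBaire} (hO : IsOpen O) :
    ∃ C : ℕ → Set HatBaire, (∀ n, C n = ∅ ∨ ∃ σ, C n = cylH σ) ∧ O = ⋃ n, C n := by
  classical
  set T := {σ : List Hat | cylH σ ⊆ O} with hT
  have hcover : O = ⋃ σ ∈ T, cylH σ := by
    apply Set.Subset.antisymm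
    · intro X hX
      obtain ⟨I, u, hu, hsub⟩ := isOpen_pi_iff.mp hO X hX
      set n := (I.sup id) + 1 with hn
      have hIn : ∀ a ∈ I, a < n := fun a ha =>
        Nat.lt_succ_of_le (Finset.le_sup (f := id) ha)
      set σ := List.ofFn (fun j : Fin n => X j) with hσ
      have hget : ∀ (j : ℕ) (h : j < σ.length), σ.get ⟨j, h⟩ = X j := by
        intro j h
        simp only [List.get_eq_getElem, hσ, List.getElem_ofFn]
      have hXσ : X ∈ cylH σ := by
        intro i
        exact (hget i.1 i.2).symm
      have hσO : cylH σ ⊆ O := by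
        intro Y hY
        apply hsub
        intro a ha
        have han : a < n := hIn a ha
        have hla : a < σ.length := by simp [hσ]; omega
        have : Y a = X a := by
          have := hY ⟨a, hla⟩
          rwa [hget a hla] at this
        rw [this]
        exact (hu a ha).2
      exact Set.mem_biUnion hσO hXσ
    · intro X hX
      simp only [Set.mem_iUnion] at hX
      obtain ⟨σ, hσ, hXσ⟩ := hX
      exact hσ hXσ
  by_cases hne : T.Nonempty
  · have : Countable ↥T := Set.Countable.to_subtype (Set.to_countable T)
    have hne' : Nonempty ↥T := hne.to_subtype
    obtain ⟨f, hf⟩ := exists_surjective_nat ↥T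
    refine ⟨fun n => cylH (f n).1, fun n => Or.inr ⟨(f n).1, rfl⟩, ?_⟩
    rw [hcover]
    apply Set.Subset.antisymm
    · intro X hX
      simp only [Set.mem_iUnion] at hX ⊢
      obtain ⟨σ, hσ, hXσ⟩ := hX
      obtain ⟨n, hn⟩ := hf ⟨σ, hσ⟩
      exact ⟨n, by rw [hn]; exact hXσ⟩
    · intro X hX
      simp only [Set.mem_iUnion] at hX ⊢
      obtain ⟨n, hn⟩ := hX
      exact ⟨(f n).1, (f n).2, hn⟩
  · refine ⟨fun _ => ∅, fun n => Or.inl rfl, ?_⟩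
    rw [hcover]
    apply Set.Subset.antisymm
    · intro X hX
      simp only [Set.mem_iUnion] at hX
      obtain ⟨σ, hσ, _⟩ := hX
      exact absurd ⟨σ, hσ⟩ hne
    · simp

/-! ### Closure properties of `SigmaZero` on `HatBaire` -/

lemma sz_pos {X : Type*} [TopologicalSpace X] {γ : Ordinal} {s : Set X}
    (h : SigmaZero X γ s) : 1 ≤ γ := by
  cases h with
  | of_isOpen h => exact le_refl 1
  | iUnion hα f β hβ hf => exact le_of_lt hα

lemma sz_one_open {X : Type*} [TopologicalSpace X] {s : Set X}
    (h : SigmaZero X 1 s) : IsOpen s := by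
  cases h with
  | of_isOpen h => exact h
  | iUnion hα f β hβ hf => exact absurd hα (lt_irrefl 1)

/-- `Π⁰_{ξ'} ⊆ Σ⁰_ξ` for `ξ' < ξ`. -/
lemma sz_of_compl {ξ' ξ : Ordinal} {s : Set HatBaire}
    (h : SigmaZero HatBaire ξ' sᶜ) (hlt : ξ' < ξ) (h1 : 1 < ξ) :
    SigmaZero HatBaire ξ s := by
  have := SigmaZero.iUnion (X := HatBaire) h1 (fun _ => s) (fun _ => ξ')
    (fun _ => hlt) (fun _ => h)
  rwa [Set.iUnion_const] at this

lemma sz_open {O : Set HatBaire} (hO : IsOpen O) {ξ : Ordinal} (hξ : 1 ≤ ξ) :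
    SigmaZero HatBaire ξ O := by
  rcases eq_or_lt_of_le hξ with rfl | hlt
  · exact SigmaZero.of_isOpen hO
  · obtain ⟨C, hC, rfl⟩ := open_eq_iUnion_cylH hO
    refine SigmaZero.iUnion hlt C (fun _ => 1) (fun _ => hlt) (fun n => ?_)
    rcases hC n with h | ⟨σ, h⟩
    · rw [h]; simpa using SigmaZero.of_isOpen (isOpen_univ (X := HatBaire))
    · rw [h]
      exact SigmaZero.of_isOpen (isClopen_cylH σ).compl.isOpen

lemma sz_closed {F : Set HatBaire} (hF : IsClosed F) {ξ : Ordinal} (hξ : 1 < ξ) :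
    SigmaZero HatBaire ξ F :=
  sz_of_compl (SigmaZero.of_isOpen hF.isOpen_compl) (by exact_mod_cast hξ) hξ

lemma sz_mono {γ ξ : Ordinal} {s : Set HatBaire}
    (h : SigmaZero HatBaire γ s) (hle : γ ≤ ξ) : SigmaZero HatBaire ξ s := by
  rcases eq_or_lt_of_le hle with rfl | hlt
  · exact h
  · cases h with
    | of_isOpen h => exact sz_open h (le_of_lt hlt)
    | iUnion hα f β hβ hf =>
      exact SigmaZero.iUnion (lt_trans hα hlt) f β (fun n => lt_trans (hβ n) hlt) hf

lemma sz_form {ξ : Ordinal} {s : Set HatBaire}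
    (h : SigmaZero HatBaire ξ s) (h2 : 1 < ξ) :
    ∃ (g : ℕ → Set HatBaire) (β : ℕ → Ordinal),
      (∀ n, 1 ≤ β n ∧ β n < ξ ∧ SigmaZero HatBaire (β n) (g n)ᶜ) ∧ s = ⋃ n, g n := by
  cases h with
  | of_isOpen h => exact absurd h2 (lt_irrefl 1)
  | iUnion hα f β hβ hf =>
    exact ⟨f, β, fun n => ⟨sz_pos (hf n), hβ n, hf n⟩, rfl⟩

lemma sz_iUnion_nat {ξ : Ordinal} (h2 : 1 < ξ) {f : ℕ → Set HatBaire}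
    (h : ∀ n, SigmaZero HatBaire ξ (f n)) : SigmaZero HatBaire ξ (⋃ n, f n) := by
  have hforms := fun n => sz_form (h n) h2
  choose g β hgood heq using hforms
  have hrw : ⋃ n, f n = ⋃ t, g (Nat.unpair t).1 (Nat.unpair t).2 := by
    ext x
    simp only [Set.mem_iUnion]
    constructor
    · rintro ⟨n, hx⟩
      rw [heq n] at hx
      obtain ⟨m, hm⟩ := Set.mem_iUnion.mp hx
      exact ⟨Nat.pair n m, by simpa [Nat.unpair_pair] using hm⟩
    · rintro ⟨t, ht⟩
      refine ⟨(Nat.unpair t).1, ?_⟩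
      rw [heq (Nat.unpair t).1]
      exact Set.mem_iUnion.mpr ⟨(Nat.unpair t).2, ht⟩
  rw [hrw]
  exact SigmaZero.iUnion h2 _ (fun t => β (Nat.unpair t).1 (Nat.unpair t).2)
    (fun t => (hgood _ _).2.1) (fun t => (hgood _ _).2.2)

lemma sz_iUnion_countable {ι : Type*} [Countable ι] {ξ : Ordinal} (h2 : 1 < ξ)
    {f : ι → Set HatBaire} (h : ∀ i, SigmaZero HatBaire ξ (f i)) :
    SigmaZero HatBaire ξ (⋃ i, f i) := by
  cases isEmpty_or_nonempty ι with
  | inl hemp =>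
    have : ⋃ i, f i = ∅ := by simp
    rw [this]
    exact sz_open isOpen_empty (le_of_lt h2)
  | inr hne =>
    obtain ⟨e, he⟩ := exists_surjective_nat ι
    have : ⋃ i, f i = ⋃ n, f (e n) := by
      apply Set.Subset.antisymm
      · intro x hx
        obtain ⟨i, hi⟩ := Set.mem_iUnion.mp hx
        obtain ⟨n, rfl⟩ := he i
        exact Set.mem_iUnion.mpr ⟨n, hi⟩
      · intro x hx
        obtain ⟨n, hn⟩ := Set.mem_iUnion.mp hx
        exact Set.mem_iUnion.mpr ⟨e n, hn⟩
    rw [this]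
    exact sz_iUnion_nat h2 fun n => h (e n)

lemma sz_union2 {ξ : Ordinal} {s t : Set HatBaire} (h2 : 1 ≤ ξ)
    (hs : SigmaZero HatBaire ξ s) (ht : SigmaZero HatBaire ξ t) :
    SigmaZero HatBaire ξ (s ∪ t) := by
  rcases eq_or_lt_of_le h2 with rfl | hlt
  · exact SigmaZero.of_isOpen ((sz_one_open hs).union (sz_one_open ht))
  · have : s ∪ t = ⋃ b : Bool, (if b then s else t) := by
      ext x; simp [Set.mem_union, or_comm]
    rw [this]
    exact sz_iUnion_countable hlt fun b => by cases b <;> simp [hs, ht]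

lemma sz_inter2 {ξ : Ordinal} {s t : Set HatBaire} (h2 : 1 ≤ ξ)
    (hs : SigmaZero HatBaire ξ s) (ht : SigmaZero HatBaire ξ t) :
    SigmaZero HatBaire ξ (s ∩ t) := by
  rcases eq_or_lt_of_le h2 with rfl | hlt
  · exact SigmaZero.of_isOpen ((sz_one_open hs).inter (sz_one_open ht))
  · obtain ⟨g, β, hg, rfl⟩ := sz_form hs hlt
    obtain ⟨g', β', hg', rfl⟩ := sz_form ht hlt
    have hrw : (⋃ n, g n) ∩ (⋃ n, g' n) =
        ⋃ t, (g (Nat.unpair t).1 ∩ g' (Nat.unpair t).2) := by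
      ext x
      simp only [Set.mem_inter_iff, Set.mem_iUnion]
      constructor
      · rintro ⟨⟨n, hn⟩, ⟨m, hm⟩⟩
        exact ⟨Nat.pair n m, by simpa [Nat.unpair_pair] using ⟨hn, hm⟩⟩
      · rintro ⟨t, h1, h2⟩
        exact ⟨⟨_, h1⟩, ⟨_, h2⟩⟩
    rw [hrw]
    refine SigmaZero.iUnion hlt _
      (fun t => max (β (Nat.unpair t).1) (β' (Nat.unpair t).2)) (fun t => ?_) (fun t => ?_)
    · exact max_lt (hg _).2.1 (hg' _).2.1
    · set n := (Nat.unpair t).1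
      set m := (Nat.unpair t).2
      have hc : (g n ∩ g' m)ᶜ = (g n)ᶜ ∪ (g' m)ᶜ := by
        rw [Set.compl_inter]
      rw [hc]
      have hmax : 1 ≤ max (β n) (β' m) := le_trans (hg n).1 (le_max_left _ _)
      exact sz_union2 hmax (sz_mono (hg n).2.2 (le_max_left _ _))
        (sz_mono (hg' m).2.2 (le_max_right _ _))

/-- the class of sets which are `Σ⁰_ξ` together with their complements. -/
def Good (ξ : Ordinal) (s : Set HatBaire) : Prop :=
  SigmaZero HatBaire ξ s ∧ SigmaZero HatBaire ξ sᶜ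

lemma Good.compl {ξ : Ordinal} {s : Set HatBaire} (h : Good ξ s) : Good ξ sᶜ :=
  ⟨h.2, by simpa using h.1⟩

lemma Good.inter {ξ : Ordinal} {s t : Set HatBaire} (h2 : 1 ≤ ξ)
    (hs : Good ξ s) (ht : Good ξ t) : Good ξ (s ∩ t) := by
  refine ⟨sz_inter2 h2 hs.1 ht.1, ?_⟩
  rw [Set.compl_inter]
  exact sz_union2 h2 hs.2 ht.2

lemma Good.union {ξ : Ordinal} {s t : Set HatBaire} (h2 : 1 ≤ ξ)
    (hs : Good ξ s) (ht : Good ξ t) : Good ξ (s ∪ t) := by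
  refine ⟨sz_union2 h2 hs.1 ht.1, ?_⟩
  rw [Set.compl_union]
  exact sz_inter2 h2 hs.2 ht.2

lemma good_clopen {ξ : Ordinal} {s : Set HatBaire} (h2 : 1 ≤ ξ) (h : IsClopen s) :
    Good ξ s :=
  ⟨sz_open h.isOpen h2, sz_open h.compl.isOpen h2⟩

lemma good_univ {ξ : Ordinal} (h2 : 1 ≤ ξ) : Good ξ (Set.univ : Set HatBaire) :=
  good_clopen h2 isClopen_univ

lemma good_empty {ξ : Ordinal} (h2 : 1 ≤ ξ) : Good ξ (∅ : Set HatBaire) :=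
  good_clopen h2 isClopen_empty

lemma good_ite {ξ : Ordinal} (h2 : 1 ≤ ξ) (p : Prop) {s t : Set HatBaire}
    (hs : Good ξ s) (ht : Good ξ t) : Good ξ (if p then s else t) := by
  by_cases h : p <;> simp [h, hs, ht]

end KM
namespace KM

/-! ### Ordinal utilities -/

open Cardinal in
lemma lt_aleph_one_iff {c : Cardinal.{0}} : c < ℵ₁ ↔ c ≤ ℵ₀ := by
  rw [← succ_aleph0, Order.lt_succ_iff]

open Cardinal in
lemma omega0_opow_lt {α : Ordinal.{0}} (hα : α.card ≤ ℵ₀) :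
    Ordinal.omega0 ^ α < (ℵ₁).ord := by
  induction α using Ordinal.induction with
  | h α IH =>
    rcases Ordinal.zero_or_succ_or_isSuccLimit α with rfl | ⟨β, rfl⟩ | hlim
    · rw [Ordinal.opow_zero, Cardinal.lt_ord, Ordinal.card_one]
      exact lt_of_le_of_lt Cardinal.one_le_aleph0 aleph0_lt_aleph_one
    · have hβ : β < Order.succ β := Order.lt_succ β
      have hβc : β.card ≤ ℵ₀ := le_trans (Ordinal.card_le_card hβ.le) hα
      have hIH := IH β hβ hβc
      rw [Cardinal.lt_ord, lt_aleph_one_iff] at hIH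
      rw [Ordinal.opow_succ, Cardinal.lt_ord, Ordinal.card_mul, Ordinal.card_omega0,
        lt_aleph_one_iff]
      calc (Ordinal.omega0 ^ β).card * ℵ₀ ≤ ℵ₀ * ℵ₀ :=
            mul_le_mul' hIH (le_refl _)
        _ = ℵ₀ := aleph0_mul_aleph0
    · have h1 : ∀ β (_ : β < α), Ordinal.omega0 ^ β < (ℵ₁).ord := fun β hβ =>
        IH β hβ (le_trans (Ordinal.card_le_card hβ.le) hα)
      have hco : #(Set.Iio α) ≤ (ℵ₀ : Cardinal.{1}) := by
        rw [Ordinal.mk_Iio_ordinal]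
        calc Cardinal.lift.{1} α.card ≤ Cardinal.lift.{1} ℵ₀ := Cardinal.lift_le.mpr hα
          _ = ℵ₀ := Cardinal.lift_aleph0
      haveI : Countable ↥(Set.Iio α) := mk_le_aleph0_iff.mp hco
      haveI : Nonempty ↥(Set.Iio α) := ⟨⟨0, hlim.pos⟩⟩
      obtain ⟨g, hg⟩ := exists_surjective_nat ↥(Set.Iio α)
      have hsup : Ordinal.omega0 ^ α ≤ ⨆ n, Ordinal.omega0 ^ (g n).1 := by
        rw [(Ordinal.isNormal_opow Ordinal.one_lt_omega0).le_iff_forall_le hlim]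
        intro β hβ
        obtain ⟨n, hn⟩ := hg ⟨β, hβ⟩
        have := Ordinal.le_iSup (fun n => Ordinal.omega0 ^ (g n).1) n
        rw [hn] at this
        exact this
      refine lt_of_le_of_lt hsup ?_
      apply Ordinal.iSup_lt_ord
      · rw [Cardinal.mk_nat, Cardinal.isRegular_aleph_one.cof_eq]
        exact aleph0_lt_aleph_one
      · intro n
        exact h1 (g n).1 (g n).2

open Cardinal in
lemma card_omega0_opow_le {α : Ordinal.{0}} (hα : α.card ≤ ℵ₀) :
    (Ordinal.omega0 ^ α).card ≤ ℵ₀ := by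
  have := omega0_opow_lt hα
  rwa [Cardinal.lt_ord, lt_aleph_one_iff] at this

open Cardinal in
lemma card_xi_le {α : Ordinal.{0}} (hα : α.card ≤ ℵ₀) :
    (1 + Ordinal.omega0 ^ α).card ≤ ℵ₀ := by
  rw [Ordinal.card_add, Ordinal.card_one]
  calc (1 : Cardinal) + (Ordinal.omega0 ^ α).card ≤ ℵ₀ + ℵ₀ :=
        add_le_add Cardinal.one_le_aleph0 (card_omega0_opow_le hα)
    _ = ℵ₀ := Cardinal.aleph0_add_aleph0

lemma two_le_xi (α : Ordinal.{0}) : 2 ≤ 1 + Ordinal.omega0 ^ α := by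
  have h1 : (1 : Ordinal) ≤ Ordinal.omega0 ^ α :=
    Order.one_le_iff_pos.mpr (Ordinal.opow_pos α Ordinal.omega0_pos)
  calc (2 : Ordinal) = 1 + 1 := by rw [one_add_one_eq_two]
    _ ≤ 1 + Ordinal.omega0 ^ α := add_le_add_right h1 1

open Cardinal in
lemma card_lt_of_lt {γ ξ : Ordinal.{0}} (h : γ < ξ) (hξ : ξ.card ≤ ℵ₀) : γ.card ≤ ℵ₀ :=
  le_trans (Ordinal.card_le_card h.le) hξ

/-! ### enumerations of levels below a countable ordinal -/

open Cardinal in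
lemma exists_enum (γ : Ordinal.{0}) (h2 : 2 ≤ γ) (hc : γ.card ≤ ℵ₀) :
    ∃ e : ℕ → Ordinal.{0}, (∀ n, 1 ≤ e n ∧ e n < γ) ∧
      ∀ β, 1 ≤ β → β < γ → ∀ N, ∃ n, N ≤ n ∧ e n = β := by
  have hmem : (1 : Ordinal) ∈ Set.Ico (1 : Ordinal) γ :=
    ⟨le_refl 1, lt_of_lt_of_le one_lt_two h2⟩
  haveI : Nonempty ↥(Set.Ico (1:Ordinal) γ) := ⟨⟨1, hmem⟩⟩
  have hco : #(Set.Ico (1:Ordinal) γ) ≤ (ℵ₀ : Cardinal.{1}) := by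
    calc #(Set.Ico (1:Ordinal) γ) ≤ #(Set.Iio γ) :=
          Cardinal.mk_le_mk_of_subset (fun x hx => hx.2)
      _ = Cardinal.lift.{1} γ.card := Ordinal.mk_Iio_ordinal γ
      _ ≤ Cardinal.lift.{1} ℵ₀ := Cardinal.lift_le.mpr hc
      _ = ℵ₀ := Cardinal.lift_aleph0
  haveI : Countable ↥(Set.Ico (1:Ordinal) γ) := mk_le_aleph0_iff.mp hco
  obtain ⟨f, hf⟩ := exists_surjective_nat ↥(Set.Ico (1:Ordinal) γ)
  refine ⟨fun n => (f (Nat.unpair n).2).1,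
    fun n => ⟨(f (Nat.unpair n).2).2.1, (f (Nat.unpair n).2).2.2⟩, ?_⟩
  intro β h1 hβ N
  obtain ⟨k, hk⟩ := hf ⟨β, h1, hβ⟩
  refine ⟨Nat.pair N k, Nat.left_le_pair N k, ?_⟩
  show ((f (Nat.unpair (Nat.pair N k)).2 : ↥(Set.Ico (1:Ordinal) γ)) : Ordinal) = β
  rw [Nat.unpair_pair]
  simp only [hk]

/-- a fixed enumeration, with infinite repetitions, of the interval `[1, γ)`. -/
noncomputable def Efun (γ : Ordinal.{0}) : ℕ → Ordinal.{0} :=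
  if h : 2 ≤ γ ∧ γ.card ≤ Cardinal.aleph0 then Classical.choose (exists_enum γ h.1 h.2)
  else fun _ => 1

lemma Efun_spec {γ : Ordinal.{0}} (h2 : 2 ≤ γ) (hc : γ.card ≤ Cardinal.aleph0) :
    (∀ n, 1 ≤ Efun γ n ∧ Efun γ n < γ) ∧
      ∀ β, 1 ≤ β → β < γ → ∀ N, ∃ n, N ≤ n ∧ Efun γ n = β := by
  rw [Efun, dif_pos ⟨h2, hc⟩]
  exact Classical.choose_spec (exists_enum γ h2 hc)

end KM
namespace KM

/-! ### the transfinite hierarchy of complete sets -/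

/-- combining countably many elements of `ω̂^ω` into one. -/
def combine (f : ℕ → HatBaire) : HatBaire := fun q => f (Nat.unpair q).1 (Nat.unpair q).2

/-- the `n`-th component. -/
def proj (n : ℕ) (Y : HatBaire) : HatBaire := fun j => Y (Nat.pair n j)

lemma proj_combine (f : ℕ → HatBaire) (n : ℕ) : proj n (combine f) = f n := by
  funext j
  simp [proj, combine, Nat.unpair_pair]

/-- an element of `ω̂^ω` with no passes. -/
def Total (Y : HatBaire) : Prop := ∀ i, (Y i).isSome

lemma total_combine {f : ℕ → HatBaire} (h : ∀ n, Total (f n)) : Total (combine f) :=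
  fun q => h _ _

lemma two_le_iff_one_lt {γ : Ordinal.{0}} : 2 ≤ γ ↔ 1 < γ := by
  rw [← one_add_one_eq_two, Ordinal.add_one_eq_succ, Order.succ_le_iff]

/-- the hierarchy `D γ` of `Π⁰_γ`-complete subsets of `ω̂^ω`. -/
noncomputable def Dset : Ordinal.{0} → Set HatBaire :=
  WellFounded.fix Ordinal.lt_wf (fun γ rec =>
    if h : 2 ≤ γ ∧ γ.card ≤ Cardinal.aleph0 then
      {Y | ∀ n, proj n Y ∉ rec (Efun γ n) ((Efun_spec h.1 h.2).1 n).2}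
    else {Y | ∀ n, Y n ≠ some 0})

lemma Dset_one : Dset 1 = {Y : HatBaire | ∀ n, Y n ≠ some 0} := by
  rw [Dset, WellFounded.fix_eq]
  have : ¬ (2 ≤ (1 : Ordinal) ∧ (1 : Ordinal).card ≤ Cardinal.aleph0) := by
    rintro ⟨h, -⟩
    exact absurd (lt_of_lt_of_le one_lt_two h) (lt_irrefl 1)
  rw [dif_neg this]

lemma Dset_big {γ : Ordinal.{0}} (h2 : 2 ≤ γ) (hc : γ.card ≤ Cardinal.aleph0) :
    Dset γ = {Y : HatBaire | ∀ n, proj n Y ∉ Dset (Efun γ n)} := by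
  conv_lhs => rw [Dset, WellFounded.fix_eq, dif_pos ⟨h2, hc⟩]
  rfl

/-- member and non-member total witnesses for `D γ`. -/
noncomputable def wz : Ordinal.{0} → HatBaire × HatBaire :=
  WellFounded.fix Ordinal.lt_wf (fun γ rec =>
    if h : 2 ≤ γ ∧ γ.card ≤ Cardinal.aleph0 then
      (combine (fun n => (rec (Efun γ n) ((Efun_spec h.1 h.2).1 n).2).2),
       combine (fun n => (rec (Efun γ n) ((Efun_spec h.1 h.2).1 n).2).1))
    else ((fun _ => some 1), (fun _ => some 0)))

lemma wz_small {γ : Ordinal.{0}} (h : ¬ (2 ≤ γ ∧ γ.card ≤ Cardinal.aleph0)) :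
    wz γ = ((fun _ => some 1), (fun _ => some 0)) := by
  rw [wz, WellFounded.fix_eq, dif_neg h]

lemma wz_big {γ : Ordinal.{0}} (h2 : 2 ≤ γ) (hc : γ.card ≤ Cardinal.aleph0) :
    wz γ = (combine (fun n => (wz (Efun γ n)).2), combine (fun n => (wz (Efun γ n)).1)) := by
  conv_lhs => rw [wz, WellFounded.fix_eq, dif_pos ⟨h2, hc⟩]
  rfl

lemma wz_spec : ∀ γ : Ordinal.{0}, 1 ≤ γ → γ.card ≤ Cardinal.aleph0 →
    Total (wz γ).1 ∧ Total (wz γ).2 ∧ (wz γ).1 ∈ Dset γ ∧ (wz γ).2 ∉ Dset γ := by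
  intro γ
  induction γ using Ordinal.induction with
  | h γ IH =>
    intro h1 hc
    by_cases h2 : 2 ≤ γ
    · have hE := Efun_spec h2 hc
      have hEok : ∀ n, 1 ≤ Efun γ n ∧ Efun γ n < γ := hE.1
      have hIH : ∀ n, Total (wz (Efun γ n)).1 ∧ Total (wz (Efun γ n)).2 ∧
          (wz (Efun γ n)).1 ∈ Dset (Efun γ n) ∧ (wz (Efun γ n)).2 ∉ Dset (Efun γ n) :=
        fun n => IH _ (hEok n).2 (hEok n).1 (card_lt_of_lt (hEok n).2 hc)
      rw [wz_big h2 hc, Dset_big h2 hc]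
      refine ⟨total_combine fun n => (hIH n).2.1, total_combine fun n => (hIH n).1, ?_, ?_⟩
      · intro n
        rw [proj_combine]
        exact (hIH n).2.2.2
      · intro hmem
        have := hmem 0
        rw [proj_combine] at this
        exact this (hIH 0).2.2.1
    · have hns : ¬ (2 ≤ γ ∧ γ.card ≤ Cardinal.aleph0) := fun h => h2 h.1
      have hγ1 : γ = 1 := by
        rcases lt_or_eq_of_le h1 with h | h
        · exact absurd (two_le_iff_one_lt.mpr h) h2
        · exact h.symm
      subst hγ1
      rw [wz_small hns, Dset_one]
      refine ⟨fun i => rfl, fun i => rfl, fun n h => by simp at h, ?_⟩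
      intro hmem
      exact (hmem 0) rfl

/-- the reindexing lemma: membership of an "open-atom extraction" in `D γ` is `Π⁰_γ`. -/
lemma pt_lemma (dec : HatBaire → ℕ → Hat)
    (hopen : ∀ p c, IsOpen {Z : HatBaire | dec Z p = some c}) :
    ∀ γ : Ordinal.{0}, 1 ≤ γ → γ.card ≤ Cardinal.aleph0 → ∀ g : ℕ → ℕ,
      PiZero HatBaire γ {Z | (fun j => dec Z (g j)) ∈ Dset γ} := by
  intro γ
  induction γ using Ordinal.induction with
  | h γ IH =>
    intro h1 hc g
    by_cases h2 : 2 ≤ γ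
    · have hE := Efun_spec h2 hc
      have hrw : {Z : HatBaire | (fun j => dec Z (g j)) ∈ Dset γ}ᶜ =
          ⋃ n, {Z | (fun j => dec Z (g (Nat.pair n j))) ∈ Dset (Efun γ n)} := by
        ext Z
        rw [Set.mem_compl_iff, Set.mem_setOf_eq, Dset_big h2 hc]
        simp only [Set.mem_setOf_eq, Set.mem_iUnion, not_forall, not_not]
        constructor
        · rintro ⟨n, hn⟩
          exact ⟨n, hn⟩
        · rintro ⟨n, hn⟩
          exact ⟨n, hn⟩
      show SigmaZero HatBaire γ _
      rw [hrw]
      refine SigmaZero.iUnion (two_le_iff_one_lt.mp h2) _ (Efun γ)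
        (fun n => (hE.1 n).2) (fun n => ?_)
      exact IH (Efun γ n) (hE.1 n).2 (hE.1 n).1 (card_lt_of_lt (hE.1 n).2 hc)
        (fun j => g (Nat.pair n j))
    · have hγ1 : γ = 1 := by
        rcases lt_or_eq_of_le h1 with h | h
        · exact absurd (two_le_iff_one_lt.mpr h) h2
        · exact h.symm
      subst hγ1
      show SigmaZero HatBaire 1 _
      have hrw : {Z : HatBaire | (fun j => dec Z (g j)) ∈ Dset 1}ᶜ =
          ⋃ j, {Z | dec Z (g j) = some 0} := by
        ext Z
        rw [Set.mem_compl_iff, Set.mem_setOf_eq, Dset_one]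
        simp only [Set.mem_setOf_eq, Set.mem_iUnion, not_forall, not_not]
      rw [hrw]
      exact SigmaZero.of_isOpen (isOpen_iUnion fun j => hopen (g j) 0)

/-! ### continuity helper -/

lemma continuous_ite_const {s : Set HatBaire} (hs : IsClopen s) (a b : Hat) :
    Continuous fun X => if X ∈ s then a else b := by
  rw [continuous_def]
  intro U _
  by_cases ha : a ∈ U <;> by_cases hb : b ∈ U
  · have : (fun X => if X ∈ s then a else b) ⁻¹' U = Set.univ := by
      ext X; by_cases h : X ∈ s <;> simp [h, ha, hb]
    rw [this]; exact isOpen_univ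
  · have : (fun X => if X ∈ s then a else b) ⁻¹' U = s := by
      ext X; by_cases h : X ∈ s <;> simp [h, ha, hb]
    rw [this]; exact hs.isOpen
  · have : (fun X => if X ∈ s then a else b) ⁻¹' U = sᶜ := by
      ext X; by_cases h : X ∈ s <;> simp [h, ha, hb]
    rw [this]; exact hs.compl.isOpen
  · have : (fun X => if X ∈ s then a else b) ⁻¹' U = ∅ := by
      ext X; by_cases h : X ∈ s <;> simp [h, ha, hb]
    rw [this]; exact isOpen_empty

/-! ### strictly monotone selections -/

lemma exists_strictMono_selection {P : ℕ → ℕ → Prop}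
    (h : ∀ N n, ∃ m, N ≤ m ∧ P n m) :
    ∃ mMap : ℕ → ℕ, StrictMono mMap ∧ ∀ n, P n (mMap n) := by
  choose F hF1 hF2 using h
  set mMap : ℕ → ℕ := fun n => Nat.rec (F 0 0) (fun k prev => F (prev + 1) (k + 1)) n
    with hmM
  have hsucc : ∀ n, mMap (n + 1) = F (mMap n + 1) (n + 1) := fun n => rfl
  refine ⟨mMap, strictMono_nat_of_lt_succ fun n => ?_, fun n => ?_⟩
  · have := hF1 (mMap n + 1) (n + 1)
    rw [hsucc n] at *
    omega
  · cases n with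
    | zero => exact hF2 0 0
    | succ k =>
      rw [hsucc k]
      exact hF2 _ _

/-! ### the hardness lemma -/

lemma hardness {γ : Ordinal.{0}} {s : Set HatBaire} (h : SigmaZero HatBaire γ s) :
    γ.card ≤ Cardinal.aleph0 →
    ∃ θ : HatBaire → HatBaire, Continuous θ ∧ (∀ X, Total (θ X)) ∧
      ∀ X, X ∈ s ↔ θ X ∉ Dset γ := by
  induction h with
  | of_isOpen hop =>
    intro _
    obtain ⟨C, hC, rfl⟩ := open_eq_iUnion_cylH hop
    have hclopen : ∀ n, IsClopen (C n) := by
      intro n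
      rcases hC n with h | ⟨σ, h⟩
      · rw [h]; exact isClopen_empty
      · rw [h]; exact isClopen_cylH σ
    refine ⟨fun X n => if X ∈ C n then some 0 else some 1, ?_, ?_, ?_⟩
    · exact continuous_pi fun n => continuous_ite_const (hclopen n) (some 0) (some 1)
    · intro X n
      by_cases h : X ∈ C n <;> simp [h]
    · intro X
      rw [Dset_one]
      simp only [Set.mem_setOf_eq, not_forall, not_not, Set.mem_iUnion]
      constructor
      · rintro ⟨n, hn⟩
        exact ⟨n, by simp [hn]⟩
      · rintro ⟨n, hn⟩
        by_cases h : X ∈ C n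
        · exact ⟨n, h⟩
        · rw [if_neg h] at hn
          simp at hn
  | iUnion hα f β hβ hf IH =>
    rename_i γ'
    intro hc
    have h2 : 2 ≤ γ' := two_le_iff_one_lt.mpr hα
    have hE := Efun_spec h2 hc
    have hsel : ∀ N n, ∃ m, N ≤ m ∧ Efun γ' m = β n := fun N n =>
      hE.2 (β n) (sz_pos (hf n)) (hβ n) N
    obtain ⟨mM, hmono, hm⟩ := exists_strictMono_selection hsel
    have hIH : ∀ n, ∃ θ : HatBaire → HatBaire, Continuous θ ∧ (∀ X, Total (θ X)) ∧
        ∀ X, X ∈ (f n)ᶜ ↔ θ X ∉ Dset (β n) :=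
      fun n => IH n (card_lt_of_lt (hβ n) hc)
    choose θsub hθc hθt hθcorr using hIH
    classical
    set θ : HatBaire → HatBaire := fun X q =>
      (if h : ∃ n, mM n = (Nat.unpair q).1 then θsub (Classical.choose h) X
       else (wz (Efun γ' (Nat.unpair q).1)).2) (Nat.unpair q).2 with hθdef
    have hproj : ∀ X a, proj a (θ X) =
        (if h : ∃ n, mM n = a then θsub (Classical.choose h) X
         else (wz (Efun γ' a)).2) := by
      intro X a
      funext j
      simp only [proj, hθdef, Nat.unpair_pair]
    refine ⟨θ, ?_, ?_, ?_⟩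
    · apply continuous_pi
      intro q
      by_cases h : ∃ n, mM n = (Nat.unpair q).1
      · simp only [hθdef, dif_pos h]
        exact (continuous_apply _).comp (hθc _)
      · simp only [hθdef, dif_neg h]
        exact continuous_const
    · intro X q
      simp only [hθdef]
      by_cases h : ∃ n, mM n = (Nat.unpair q).1
      · rw [dif_pos h]
        exact hθt _ X _
      · rw [dif_neg h]
        have hEok := hE.1 (Nat.unpair q).1
        exact (wz_spec _ hEok.1 (card_lt_of_lt hEok.2 hc)).2.1 _
    · intro X
      rw [Dset_big h2 hc]
      simp only [Set.mem_setOf_eq, not_forall, not_not, Set.mem_iUnion]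
      constructor
      · rintro ⟨n, hn⟩
        refine ⟨mM n, ?_⟩
        rw [hproj]
        have hex : ∃ n', mM n' = mM n := ⟨n, rfl⟩
        rw [dif_pos hex]
        have hn' : Classical.choose hex = n := hmono.injective (Classical.choose_spec hex)
        rw [hn', hm n]
        by_contra hnot
        exact ((hθcorr n X).mpr hnot) hn
      · rintro ⟨a, ha⟩
        rw [hproj] at ha
        by_cases h : ∃ n, mM n = a
        · rw [dif_pos h] at ha
          set n₀ := Classical.choose h
          have hsp : mM n₀ = a := Classical.choose_spec h
          refine ⟨n₀, ?_⟩
          by_contra hnot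
          have := (hθcorr n₀ X).mp hnot
          rw [← hsp, hm n₀] at ha
          exact this ha
        · rw [dif_neg h] at ha
          have hEok := hE.1 a
          exact absurd ha (wz_spec _ hEok.1 (card_lt_of_lt hEok.2 hc)).2.2.2

end KM
namespace KM

/-! ### cons and append on `ω̂^ω`, and their strips -/

lemma opt_ext {a b : Option ℕ} (h : ∀ v, a = some v ↔ b = some v) : a = b := by
  cases a with
  | none =>
    cases b with
    | none => rfl
    | some v => exact absurd ((h v).mpr rfl) (by simp)
  | some v => exact ((h v).mp rfl).symm

def consH (a : Hat) (W : HatBaire) : HatBaire := fun i =>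
  match i with
  | 0 => a
  | i + 1 => W i

lemma cnt_consH_none (W : HatBaire) : ∀ i, cnt (consH none W) (i+1) = cnt W i := by
  intro i
  induction i with
  | zero => simp [cnt, consH]
  | succ i ih =>
    show cnt (consH none W) (i+1) + _ = _
    rw [ih]
    rfl

lemma cnt_consH_some (x : ℕ) (W : HatBaire) : ∀ i,
    cnt (consH (some x) W) (i+1) = cnt W i + 1 := by
  intro i
  induction i with
  | zero => simp [cnt, consH]
  | succ i ih =>
    show cnt (consH (some x) W) (i+1) + _ = _
    rw [ih]
    show cnt W i + 1 + (if (W i).isSome then 1 else 0) = cnt W i + (if (W i).isSome then 1 else 0) + 1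
    omega

lemma strip_consH_none (W : HatBaire) (k : ℕ) :
    (strip (consH none W)).get? k = (strip W).get? k := by
  apply opt_ext
  intro v
  rw [stripGet_some_iff, stripGet_some_iff]
  constructor
  · rintro ⟨i, h1, h2⟩
    cases i with
    | zero => exact absurd h1 (by simp [consH])
    | succ j =>
      rw [cnt_consH_none] at h2
      exact ⟨j, h1, h2⟩
  · rintro ⟨j, h1, h2⟩
    exact ⟨j + 1, h1, by rw [cnt_consH_none]; exact h2⟩

lemma strip_consH_some_zero (x : ℕ) (W : HatBaire) :
    (strip (consH (some x) W)).get? 0 = some x := by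
  rw [stripGet_some_iff]
  exact ⟨0, rfl, rfl⟩

lemma strip_consH_some_succ (x : ℕ) (W : HatBaire) (k : ℕ) :
    (strip (consH (some x) W)).get? (k+1) = (strip W).get? k := by
  apply opt_ext
  intro v
  rw [stripGet_some_iff, stripGet_some_iff]
  constructor
  · rintro ⟨i, h1, h2⟩
    cases i with
    | zero =>
      exact absurd h2 (by simp [cnt])
    | succ j =>
      rw [cnt_consH_some] at h2
      exact ⟨j, h1, by omega⟩
  · rintro ⟨j, h1, h2⟩
    exact ⟨j + 1, h1, by rw [cnt_consH_some]; omega⟩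

def appH : List Hat → HatBaire → HatBaire
  | [], W => W
  | a :: τ, W => consH a (appH τ W)

lemma appH_mem_cylH (τ : List Hat) (W : HatBaire) : appH τ W ∈ cylH τ := by
  induction τ with
  | nil => intro i; exact absurd i.2 (by simp)
  | cons a τ ih =>
    intro i
    rcases i with ⟨iv, hi⟩
    cases iv with
    | zero => rfl
    | succ j =>
      have hj : j < τ.length := by simpa using hi
      exact ih ⟨j, hj⟩

lemma strip_appH (τ : List Hat) (W : HatBaire) (k : ℕ) :
    (strip (appH τ W)).get? k =
      if h : k < (τ.filterMap id).length then some ((τ.filterMap id).get ⟨k, h⟩)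
      else (strip W).get? (k - (τ.filterMap id).length) := by
  induction τ generalizing k with
  | nil => simp [appH]
  | cons a τ ih =>
    cases a with
    | none =>
      show (strip (consH none (appH τ W))).get? k = _
      rw [strip_consH_none, ih]
      have hfm : ((none : Hat) :: τ).filterMap id = τ.filterMap id := by simp
      rw [hfm]
    | some x =>
      show (strip (consH (some x) (appH τ W))).get? k = _
      have hfm : (((some x : Hat)) :: τ).filterMap id = x :: τ.filterMap id := by
        simp [List.filterMap_cons]
      rw [hfm]
      cases k with
      | zero =>
        rw [strip_consH_some_zero]
        simp
      | succ k =>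
        rw [strip_consH_some_succ, ih]
        by_cases h : k < (τ.filterMap id).length
        · rw [dif_pos h, dif_pos (by simpa using Nat.succ_lt_succ h)]
          rfl
        · have hne : ¬ (k + 1 < (x :: τ.filterMap id).length) := by
            simp only [List.length_cons]
            omega
          rw [dif_neg h, dif_neg hne]
          have hlen : k + 1 - (x :: τ.filterMap id).length = k - (τ.filterMap id).length := by
            simp only [List.length_cons]
            omega
          rw [hlen]

lemma strip_total_get (W : HatBaire) (hW : Total W) (k : ℕ) :
    (strip W).get? k = W k := stripGet_total W hW k

/-! ### the token decoder -/

/-- the strip values of `Z`, as a partial function. -/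
def svals (Z : HatBaire) (i : ℕ) : Option ℕ := (strip Z).get? i

lemma svals_congr {Z Z' : HatBaire} (h : strip Z = strip Z') : svals Z = svals Z' := by
  funext i; rw [svals, svals, h]

/-- token `i` of the stream `w` fires for position `m` with value `c`. -/
def fire (w : ℕ → Option ℕ) (m c i : ℕ) : Prop :=
  w (2*i) = some (m+1) ∧ w (2*i+1) = some (c+1) ∧
    ∀ i' < i, (∃ d, w (2*i') = some d ∧ d ≠ m+1) ∧ (∃ e, w (2*i'+1) = some e)

lemma fire_unique {w : ℕ → Option ℕ} {m c c' i i' : ℕ}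
    (h : fire w m c i) (h' : fire w m c' i') : c = c' ∧ i = i' := by
  rcases lt_trichotomy i i' with hlt | heq | hgt
  · obtain ⟨d, hd, hdne⟩ := (h'.2.2 i hlt).1
    rw [h.1] at hd
    exact absurd (Option.some_injective _ hd).symm hdne
  · subst heq
    have := h'.2.1
    rw [h.2.1] at this
    have := Option.some_injective _ this
    omega
  · obtain ⟨d, hd, hdne⟩ := (h.2.2 i' hgt).1
    rw [h'.1] at hd
    exact absurd (Option.some_injective _ hd).symm hdne

/-- the decoded output of the stream `w`. -/
noncomputable def decOut (w : ℕ → Option ℕ) (m : ℕ) : Hat :=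
  if h : ∃ p : ℕ × ℕ, fire w m p.1 p.2 then some (Classical.choose h).1 else none

lemma decOut_eq_some_iff {w : ℕ → Option ℕ} {m c : ℕ} :
    decOut w m = some c ↔ ∃ i, fire w m c i := by
  rw [decOut]
  constructor
  · intro h
    split at h
    · rename_i hex
      have hch := Classical.choose_spec hex
      cases h
      exact ⟨(Classical.choose hex).2, hch⟩
    · exact absurd h (by simp)
  · rintro ⟨i, hi⟩
    have hex : ∃ p : ℕ × ℕ, fire w m p.1 p.2 := ⟨(c, i), hi⟩
    rw [dif_pos hex]
    have hch := Classical.choose_spec hex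
    have := fire_unique hch hi
    rw [this.1]

/-- the decoded point of `Z`, depending only on `strip Z`. -/
noncomputable def decZ (Z : HatBaire) : ℕ → Hat := fun m => decOut (svals Z) m

lemma decZ_congr {Z Z' : HatBaire} (h : strip Z = strip Z') : decZ Z = decZ Z' := by
  unfold decZ
  rw [svals_congr h]

lemma isOpen_svals (p q : ℕ) : IsOpen {Z : HatBaire | svals Z p = some q} :=
  isOpen_stripGet_some p q

lemma isOpen_decZ_some (m c : ℕ) : IsOpen {Z : HatBaire | decZ Z m = some c} := by
  have hrw : {Z : HatBaire | decZ Z m = some c} =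
      ⋃ i, ({Z | svals Z (2*i) = some (m+1)} ∩ {Z | svals Z (2*i+1) = some (c+1)} ∩
        ⋂ i' : Fin i, ((⋃ d ∈ {d : ℕ | d ≠ m+1}, {Z | svals Z (2*i'.1) = some d}) ∩
          ⋃ e : ℕ, {Z | svals Z (2*i'.1+1) = some e})) := by
    ext Z
    rw [Set.mem_setOf_eq, decZ, decOut_eq_some_iff]
    constructor
    · rintro ⟨i, h1, h2, h3⟩
      refine Set.mem_iUnion.mpr ⟨i, ⟨⟨h1, h2⟩, ?_⟩⟩
      refine Set.mem_iInter.mpr fun i' => ⟨?_, ?_⟩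
      · obtain ⟨d, hd1, hd2⟩ := (h3 i'.1 i'.2).1
        exact Set.mem_biUnion hd2 hd1
      · obtain ⟨e, he⟩ := (h3 i'.1 i'.2).2
        exact Set.mem_iUnion.mpr ⟨e, he⟩
    · intro hmem
      obtain ⟨i, ⟨⟨h1, h2⟩, h3⟩⟩ := Set.mem_iUnion.mp hmem
      refine ⟨i, h1, h2, fun i' hi' => ?_⟩
      have h3' := Set.mem_iInter.mp h3 ⟨i', hi'⟩
      constructor
      · obtain ⟨d, hd1, hd2⟩ := Set.mem_iUnion₂.mp h3'.1
        exact ⟨d, hd2, hd1⟩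
      · obtain ⟨e, he⟩ := Set.mem_iUnion.mp h3'.2
        exact ⟨e, he⟩
  rw [hrw]
  refine isOpen_iUnion fun i => ?_
  refine (((isOpen_svals _ _).inter (isOpen_svals _ _)).inter ?_)
  refine isOpen_iInter_of_finite fun i' => ?_
  exact (isOpen_biUnion fun d _ => isOpen_svals _ _).inter (isOpen_iUnion fun e => isOpen_svals _ _)

end KM
namespace KM

/-! ### the universal run machine -/

def kOf (s : ℕ) : ℕ := (Nat.unpair s).1
def vOf (s : ℕ) : ℕ := (Nat.unpair (Nat.unpair s).2).1
def nOf (s : ℕ) : ℕ := (Nat.unpair (Nat.unpair s).2).2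
def slotIdx (k v n : ℕ) : ℕ := Nat.pair k (Nat.pair v n)

lemma kOf_slotIdx (k v n : ℕ) : kOf (slotIdx k v n) = k := by
  simp [kOf, slotIdx, Nat.unpair_pair]
lemma vOf_slotIdx (k v n : ℕ) : vOf (slotIdx k v n) = v := by
  simp [vOf, slotIdx, Nat.unpair_pair]
lemma nOf_slotIdx (k v n : ℕ) : nOf (slotIdx k v n) = n := by
  simp [nOf, slotIdx, Nat.unpair_pair]

/-- the level of slot `s`. -/
noncomputable def levOf (ξ : Ordinal.{0}) (s : ℕ) : Ordinal.{0} := Efun ξ (nOf s)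

/-- slot `s` is verified on input `Z`. -/
def InSet (ξ : Ordinal.{0}) (s : ℕ) (Z : HatBaire) : Prop :=
  (fun j => decZ Z (Nat.pair s j)) ∈ Dset (levOf ξ s)

lemma inSet_congr {ξ : Ordinal.{0}} {s : ℕ} {Z Z' : HatBaire} (h : strip Z = strip Z') :
    InSet ξ s Z ↔ InSet ξ s Z' := by
  unfold InSet
  rw [decZ_congr h]

/-- the values committed before step `t`. -/
noncomputable def hist (ξ : Ordinal.{0}) (Z : HatBaire) : ℕ → List ℕ
  | 0 => []
  | t + 1 =>
    if kOf (Nat.unpair t).2 = (hist ξ Z t).length ∧ InSet ξ (Nat.unpair t).2 Z then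
      hist ξ Z t ++ [vOf (Nat.unpair t).2]
    else hist ξ Z t

/-- the universal function (before the final input-coding wrapper). -/
noncomputable def Urun (ξ : Ordinal.{0}) (Z : HatBaire) : HatBaire := fun t =>
  if kOf (Nat.unpair t).2 = (hist ξ Z t).length ∧ InSet ξ (Nat.unpair t).2 Z then
    some (vOf (Nat.unpair t).2)
  else none

lemma hist_congr {ξ : Ordinal.{0}} {Z Z' : HatBaire} (h : strip Z = strip Z') (t : ℕ) :
    hist ξ Z t = hist ξ Z' t := by
  induction t with
  | zero => rfl
  | succ t ih =>
    show (if _ then _ else _) = (if _ then _ else _)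
    rw [ih]
    by_cases hc : kOf (Nat.unpair t).2 = (hist ξ Z' t).length ∧ InSet ξ (Nat.unpair t).2 Z'
    · rw [if_pos hc, if_pos ⟨hc.1, (inSet_congr h).mpr hc.2⟩]
    · rw [if_neg hc, if_neg (fun hc' => hc ⟨hc'.1, (inSet_congr h).mp hc'.2⟩)]

lemma Urun_congr {ξ : Ordinal.{0}} {Z Z' : HatBaire} (h : strip Z = strip Z') :
    Urun ξ Z = Urun ξ Z' := by
  funext t
  unfold Urun
  rw [hist_congr h t]
  by_cases hc : kOf (Nat.unpair t).2 = (hist ξ Z' t).length ∧ InSet ξ (Nat.unpair t).2 Z'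
  · rw [if_pos hc, if_pos ⟨hc.1, (inSet_congr h).mpr hc.2⟩]
  · rw [if_neg hc, if_neg (fun hc' => hc ⟨hc'.1, (inSet_congr h).mp hc'.2⟩)]

lemma conciliatory_Urun (ξ : Ordinal.{0}) : ConciliatoryF (Urun ξ) := by
  intro Z Z' h
  rw [Urun_congr h]

/-- the length of the history equals the number of non-pass outputs so far. -/
lemma cnt_Urun (ξ : Ordinal.{0}) (Z : HatBaire) (t : ℕ) :
    cnt (Urun ξ Z) t = (hist ξ Z t).length := by
  induction t with
  | zero => rfl
  | succ t ih =>
    show cnt (Urun ξ Z) t + _ = _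
    rw [ih]
    show _ + (if (Urun ξ Z t).isSome then 1 else 0) =
      List.length (if _ then _ else _)
    by_cases hc : kOf (Nat.unpair t).2 = (hist ξ Z t).length ∧ InSet ξ (Nat.unpair t).2 Z
    · rw [if_pos hc]
      have : Urun ξ Z t = some (vOf (Nat.unpair t).2) := by
        unfold Urun; rw [if_pos hc]
      rw [this]
      simp
    · rw [if_neg hc]
      have : Urun ξ Z t = none := by
        unfold Urun; rw [if_neg hc]
      rw [this]
      simp

lemma hist_mono_succ (ξ : Ordinal.{0}) (Z : HatBaire) (t : ℕ) :
    (hist ξ Z t).length ≤ (hist ξ Z (t+1)).length ∧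
      (hist ξ Z (t+1)).length ≤ (hist ξ Z t).length + 1 ∧
      (hist ξ Z t) <+: (hist ξ Z (t+1)) := by
  have hunf : hist ξ Z (t+1) =
      (if kOf (Nat.unpair t).2 = (hist ξ Z t).length ∧ InSet ξ (Nat.unpair t).2 Z then
        hist ξ Z t ++ [vOf (Nat.unpair t).2] else hist ξ Z t) := rfl
  rw [hunf]
  by_cases hc : kOf (Nat.unpair t).2 = (hist ξ Z t).length ∧ InSet ξ (Nat.unpair t).2 Z
  · rw [if_pos hc]
    refine ⟨by simp, by simp, ⟨[vOf (Nat.unpair t).2], rfl⟩⟩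
  · rw [if_neg hc]
    exact ⟨le_refl _, by omega, List.prefix_refl _⟩

lemma hist_prefix (ξ : Ordinal.{0}) (Z : HatBaire) {t t' : ℕ} (h : t ≤ t') :
    hist ξ Z t <+: hist ξ Z t' := by
  induction t' with
  | zero =>
    have : t = 0 := by omega
    rw [this]
  | succ t' ih =>
    rcases Nat.lt_or_ge t (t'+1) with hlt | hge
    · exact List.IsPrefix.trans (ih (by omega)) (hist_mono_succ ξ Z t').2.2
    · have : t = t' + 1 := by omega
      rw [this]

lemma hist_len_mono (ξ : Ordinal.{0}) (Z : HatBaire) {t t' : ℕ} (h : t ≤ t') :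
    (hist ξ Z t).length ≤ (hist ξ Z t').length :=
  (hist_prefix ξ Z h).length_le

/-- characterization of the strip of the run output. -/
lemma strip_Urun_some_iff (ξ : Ordinal.{0}) (Z : HatBaire) (k v : ℕ) :
    (strip (Urun ξ Z)).get? k = some v ↔
      ∃ t, (kOf (Nat.unpair t).2 = (hist ξ Z t).length ∧ InSet ξ (Nat.unpair t).2 Z) ∧
        (hist ξ Z t).length = k ∧ vOf (Nat.unpair t).2 = v := by
  rw [stripGet_some_iff]
  constructor
  · rintro ⟨t, h1, h2⟩
    rw [cnt_Urun] at h2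
    unfold Urun at h1
    split at h1
    · rename_i hc
      exact ⟨t, hc, h2, Option.some_injective _ h1⟩
    · exact absurd h1 (by simp)
  · rintro ⟨t, hc, h2, h3⟩
    refine ⟨t, ?_, by rw [cnt_Urun]; exact h2⟩
    unfold Urun
    rw [if_pos hc, h3]

/-! ### measurability of the run -/

lemma good_inSet {ξ : Ordinal.{0}} (h2 : 2 ≤ ξ) (hc : ξ.card ≤ Cardinal.aleph0) (s : ℕ) :
    Good ξ {Z | InSet ξ s Z} := by
  have hE := (Efun_spec h2 hc).1 (nOf s)
  have hlev1 : 1 ≤ levOf ξ s := hE.1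
  have hlevlt : levOf ξ s < ξ := hE.2
  have hpi : PiZero HatBaire (levOf ξ s) {Z | (fun j => decZ Z (Nat.pair s j)) ∈ Dset (levOf ξ s)} :=
    pt_lemma decZ isOpen_decZ_some (levOf ξ s) hlev1 (card_lt_of_lt hlevlt hc)
      (fun j => Nat.pair s j)
  constructor
  · exact sz_of_compl hpi hlevlt (two_le_iff_one_lt.mp h2)
  · exact sz_mono hpi hlevlt.le

lemma good_hist_len {ξ : Ordinal.{0}} (h2 : 2 ≤ ξ) (hc : ξ.card ≤ Cardinal.aleph0)
    (t k : ℕ) : Good ξ {Z | (hist ξ Z t).length = k} := by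
  have h1 : (1 : Ordinal) ≤ ξ := le_trans (by norm_num) h2
  induction t generalizing k with
  | zero =>
    rcases Nat.eq_zero_or_pos k with rfl | hk
    · have : {Z : HatBaire | (hist ξ Z 0).length = 0} = Set.univ := by
        ext Z; simp [hist]
      rw [this]; exact good_univ h1
    · have : {Z : HatBaire | (hist ξ Z 0).length = k} = ∅ := by
        ext Z; simp only [hist, List.length_nil, Set.mem_setOf_eq, Set.mem_empty_iff_false,
          iff_false]
        omega
      rw [this]; exact good_empty h1
  | succ t ih =>
    have hdecomp : {Z : HatBaire | (hist ξ Z (t+1)).length = k} =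
        (({Z | (hist ξ Z t).length = k - 1} ∩ {Z | (hist ξ Z t).length = kOf (Nat.unpair t).2}
            ∩ {Z | InSet ξ (Nat.unpair t).2 Z}) ∩ {Z : HatBaire | 1 ≤ k}) ∪
        ({Z | (hist ξ Z t).length = k} ∩
          ({Z | (hist ξ Z t).length = kOf (Nat.unpair t).2} ∩
            {Z | InSet ξ (Nat.unpair t).2 Z})ᶜ) := by
      ext Z
      have hunf : hist ξ Z (t+1) =
          (if kOf (Nat.unpair t).2 = (hist ξ Z t).length ∧ InSet ξ (Nat.unpair t).2 Z then
            hist ξ Z t ++ [vOf (Nat.unpair t).2] else hist ξ Z t) := rfl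
      simp only [Set.mem_union, Set.mem_inter_iff, Set.mem_setOf_eq, Set.mem_compl_iff,
        not_and, hunf]
      by_cases hcnd : kOf (Nat.unpair t).2 = (hist ξ Z t).length ∧ InSet ξ (Nat.unpair t).2 Z
      · rw [if_pos hcnd]
        simp only [List.length_append, List.length_singleton]
        constructor
        · intro h
          exact Or.inl ⟨⟨⟨by omega, hcnd.1.symm⟩, hcnd.2⟩, by omega⟩
        · rintro (⟨⟨⟨ha, -⟩, -⟩, hb⟩ | ⟨-, hno⟩)
          · omega
          · exact absurd hcnd.2 (hno hcnd.1.symm)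
      · rw [if_neg hcnd]
        constructor
        · intro h
          refine Or.inr ⟨h, fun hk' hin => hcnd ⟨hk'.symm, hin⟩⟩
        · rintro (⟨⟨⟨-, hk'⟩, hin⟩, -⟩ | ⟨h, -⟩)
          · exact absurd ⟨hk'.symm, hin⟩ hcnd
          · exact h
    rw [hdecomp]
    have hgk : Good ξ {Z : HatBaire | 1 ≤ k} := by
      by_cases h : 1 ≤ k
      · have : {Z : HatBaire | 1 ≤ k} = Set.univ := by ext Z; simp [h]
        rw [this]; exact good_univ h1
      · have : {Z : HatBaire | 1 ≤ k} = ∅ := by ext Z; simp [h]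
        rw [this]; exact good_empty h1
    exact Good.union h1
      (Good.inter h1 (Good.inter h1 (Good.inter h1 (ih (k-1)) (ih _)) (good_inSet h2 hc _)) hgk)
      (Good.inter h1 (ih k) (Good.inter h1 (ih _) (good_inSet h2 hc _)).compl)

lemma good_Urun_letter {ξ : Ordinal.{0}} (h2 : 2 ≤ ξ) (hc : ξ.card ≤ Cardinal.aleph0)
    (t : ℕ) (w : Hat) : Good ξ {Z | Urun ξ Z t = w} := by
  have h1 : (1 : Ordinal) ≤ ξ := le_trans (by norm_num) h2
  have hcommit : Good ξ {Z | kOf (Nat.unpair t).2 = (hist ξ Z t).length ∧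
      InSet ξ (Nat.unpair t).2 Z} := by
    have : {Z | kOf (Nat.unpair t).2 = (hist ξ Z t).length ∧ InSet ξ (Nat.unpair t).2 Z} =
        {Z | (hist ξ Z t).length = kOf (Nat.unpair t).2} ∩ {Z | InSet ξ (Nat.unpair t).2 Z} := by
      ext Z
      simp only [Set.mem_setOf_eq, Set.mem_inter_iff, eq_comm]
    rw [this]
    exact Good.inter h1 (good_hist_len h2 hc t _) (good_inSet h2 hc _)
  cases w with
  | none =>
    have : {Z | Urun ξ Z t = none} = {Z | kOf (Nat.unpair t).2 = (hist ξ Z t).length ∧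
        InSet ξ (Nat.unpair t).2 Z}ᶜ := by
      ext Z
      simp only [Set.mem_setOf_eq, Set.mem_compl_iff]
      unfold Urun
      by_cases hcnd : kOf (Nat.unpair t).2 = (hist ξ Z t).length ∧ InSet ξ (Nat.unpair t).2 Z
      · rw [if_pos hcnd]
        exact ⟨fun h => by simp at h, fun h => absurd hcnd h⟩
      · rw [if_neg hcnd]
        exact ⟨fun _ => hcnd, fun _ => rfl⟩
    rw [this]
    exact hcommit.compl
  | some v =>
    by_cases hv : v = vOf (Nat.unpair t).2
    · have : {Z | Urun ξ Z t = some v} = {Z | kOf (Nat.unpair t).2 = (hist ξ Z t).length ∧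
          InSet ξ (Nat.unpair t).2 Z} := by
        ext Z
        simp only [Set.mem_setOf_eq]
        unfold Urun
        by_cases hcnd : kOf (Nat.unpair t).2 = (hist ξ Z t).length ∧ InSet ξ (Nat.unpair t).2 Z
        · rw [if_pos hcnd]
          exact ⟨fun _ => hcnd, fun _ => by rw [hv]⟩
        · rw [if_neg hcnd]
          exact ⟨fun h => by simp at h, fun h => absurd h hcnd⟩
      rw [this]
      exact hcommit
    · have : {Z | Urun ξ Z t = some v} = ∅ := by
        ext Z
        simp only [Set.mem_setOf_eq, Set.mem_empty_iff_false, iff_false]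
        unfold Urun
        by_cases hcnd : kOf (Nat.unpair t).2 = (hist ξ Z t).length ∧ InSet ξ (Nat.unpair t).2 Z
        · rw [if_pos hcnd]
          intro h
          exact hv (Option.some_injective _ h).symm
        · rw [if_neg hcnd]
          intro h
          simp at h
      rw [this]
      exact good_empty h1

lemma good_iInter_fin {ξ : Ordinal.{0}} (h1 : (1:Ordinal) ≤ ξ) (n : ℕ)
    (f : Fin n → Set HatBaire) (h : ∀ i, Good ξ (f i)) : Good ξ (⋂ i, f i) := by
  induction n with
  | zero =>
    have : ⋂ i : Fin 0, f i = Set.univ := by simp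
    rw [this]; exact good_univ h1
  | succ n ih =>
    have : ⋂ i : Fin (n+1), f i = (⋂ i : Fin n, f i.castSucc) ∩ f (Fin.last n) := by
      apply Set.Subset.antisymm
      · intro x hx
        exact ⟨Set.mem_iInter.mpr fun i => Set.mem_iInter.mp hx _,
          Set.mem_iInter.mp hx _⟩
      · intro x hx
        refine Set.mem_iInter.mpr fun i => ?_
        rcases Fin.eq_castSucc_or_eq_last i with ⟨j, rfl⟩ | rfl
        · exact Set.mem_iInter.mp hx.1 j
        · exact hx.2
    rw [this]
    exact Good.inter h1 (ih _ fun i => h _) (h _)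

lemma sigmaMeasurable_Urun {ξ : Ordinal.{0}} (h2 : 2 ≤ ξ) (hc : ξ.card ≤ Cardinal.aleph0) :
    SigmaMeasurableH ξ (Urun ξ) := by
  intro σ
  have h1 : (1 : Ordinal) ≤ ξ := le_trans (by norm_num) h2
  have hrw : Urun ξ ⁻¹' cylH σ = ⋂ i : Fin σ.length, {Z | Urun ξ Z i.1 = σ.get i} := by
    ext Z
    simp only [Set.mem_preimage, cylH, Set.mem_setOf_eq, Set.mem_iInter]
  rw [hrw]
  exact (good_iInter_fin h1 σ.length _ fun i => good_Urun_letter h2 hc i.1 (σ.get i)).1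

end KM
namespace KM

/-! ### abstract correctness of the run machine -/

lemma seq_stable (σG : Stream'.Seq ℕ) {j k : ℕ} (hjk : j ≤ k) {v : ℕ}
    (h : σG.get? k = some v) : ∃ w, σG.get? j = some w := by
  by_contra hno
  push_neg at hno
  have hj : σG.get? j = none := by
    cases hcase : σG.get? j with
    | none => rfl
    | some w => exact absurd hcase (hno w)
  have : ∀ d, σG.get? (j + d) = none := by
    intro d
    induction d with
    | zero => exact hj
    | succ d ih => exact σG.2 ih
  have := this (k - j)
  rw [show j + (k - j) = k by omega] at this
  rw [this] at h
  exact absurd h (by simp)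

section Run

variable {ξ : Ordinal.{0}} {Z : HatBaire} {σG : Stream'.Seq ℕ}

/-- discrete intermediate value property for the history length. -/
lemma hist_ivt (ξ : Ordinal.{0}) (Z : HatBaire) (T target : ℕ)
    (h : target ≤ (hist ξ Z T).length) : ∃ t ≤ T, (hist ξ Z t).length = target := by
  induction T with
  | zero =>
    have : (hist ξ Z 0).length = 0 := rfl
    refine ⟨0, le_refl 0, by omega⟩
  | succ T ih =>
    rcases Nat.lt_or_ge (hist ξ Z T).length target with hlt | hge
    · have hbound := (hist_mono_succ ξ Z T).2.1
      refine ⟨T + 1, le_refl _, by omega⟩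
    · obtain ⟨t, ht1, ht2⟩ := ih hge
      exact ⟨t, by omega, ht2⟩

/-- extraction of a transition step. -/
lemma hist_transition (ξ : Ordinal.{0}) (Z : HatBaire) (T k : ℕ)
    (h : (hist ξ Z T).length = k + 1) :
    ∃ t < T, (hist ξ Z t).length = k ∧
      (kOf (Nat.unpair t).2 = (hist ξ Z t).length ∧ InSet ξ (Nat.unpair t).2 Z) ∧
      (hist ξ Z (t+1)).length = k + 1 := by
  induction T with
  | zero => exact absurd h (by simp [hist])
  | succ T ih =>
    rcases Nat.lt_or_ge (hist ξ Z T).length (k+1) with hlt | hge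
    · -- transition at step T
      have hbound := (hist_mono_succ ξ Z T).2.1
      have hlenT : (hist ξ Z T).length = k := by omega
      refine ⟨T, by omega, hlenT, ?_, h⟩
      by_contra hno
      have : hist ξ Z (T+1) = hist ξ Z T := by
        show (if _ then _ else _) = _
        rw [if_neg hno]
      rw [this] at h
      omega
    · have hmon := (hist_mono_succ ξ Z T).1
      obtain ⟨t, ht1, ht2⟩ := ih (by omega : (hist ξ Z T).length = k + 1)
      exact ⟨t, by omega, ht2⟩

lemma run_correct
    (H1 : ∀ s, InSet ξ s Z → σG.get? (kOf s) = some (vOf s))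
    (H2 : ∀ k v, σG.get? k = some v → ∃ s, kOf s = k ∧ vOf s = v ∧ InSet ξ s Z) :
    strip (Urun ξ Z) = σG := by
  -- if the sequence stops at k, the history never exceeds k
  have hstuck : ∀ k, σG.get? k = none → ∀ t, (hist ξ Z t).length ≤ k := by
    intro k hk t
    induction t with
    | zero => simp [hist]
    | succ t ih =>
      by_cases hc : kOf (Nat.unpair t).2 = (hist ξ Z t).length ∧ InSet ξ (Nat.unpair t).2 Z
      · have hval := H1 _ hc.2
        rw [hc.1] at hval
        have hlen : (hist ξ Z t).length ≠ k := by
          intro he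
          rw [he, hk] at hval
          exact absurd hval (by simp)
        have := (hist_mono_succ ξ Z t).2.1
        omega
      · have : hist ξ Z (t+1) = hist ξ Z t := by
          show (if _ then _ else _) = _
          rw [if_neg hc]
        rw [this]
        exact ih
  -- if the sequence is defined at k, the history eventually exceeds k
  have hreach : ∀ k v, σG.get? k = some v → ∃ t, (hist ξ Z t).length = k + 1 := by
    intro k
    induction k with
    | zero =>
      intro v hv
      obtain ⟨s, hs1, hs2, hs3⟩ := H2 0 v hv
      set t₁ := Nat.pair 0 s with ht₁
      have hk1 : (Nat.unpair t₁).2 = s := by rw [ht₁, Nat.unpair_pair]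
      by_cases hl : (hist ξ Z t₁).length = 0
      · refine ⟨t₁ + 1, ?_⟩
        have hcommit : kOf (Nat.unpair t₁).2 = (hist ξ Z t₁).length ∧
            InSet ξ (Nat.unpair t₁).2 Z := by
          rw [hk1, hs1, hl]
          exact ⟨rfl, by rw [hk1] at *; exact hs3⟩
        have : hist ξ Z (t₁+1) = hist ξ Z t₁ ++ [vOf (Nat.unpair t₁).2] := by
          show (if _ then _ else _) = _
          rw [if_pos hcommit]
        rw [this]
        simp [hl]
      · obtain ⟨t, -, ht⟩ := hist_ivt ξ Z t₁ 1 (by omega)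
        exact ⟨t, ht⟩
    | succ k ihk =>
      intro v hv
      obtain ⟨w, hw⟩ := seq_stable σG (by omega : k ≤ k + 1) hv
      obtain ⟨t₀, ht₀⟩ := ihk w hw
      obtain ⟨s, hs1, hs2, hs3⟩ := H2 (k+1) v hv
      set t₁ := Nat.pair t₀ s with ht₁
      have hk1 : (Nat.unpair t₁).2 = s := by rw [ht₁, Nat.unpair_pair]
      have ht₀t₁ : t₀ ≤ t₁ := Nat.left_le_pair t₀ s
      have hmono := hist_len_mono ξ Z ht₀t₁
      rw [ht₀] at hmono
      rcases Nat.lt_or_ge (hist ξ Z t₁).length (k+2) with hlt | hge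
      · have hl : (hist ξ Z t₁).length = k + 1 := by omega
        refine ⟨t₁ + 1, ?_⟩
        have hcommit : kOf (Nat.unpair t₁).2 = (hist ξ Z t₁).length ∧
            InSet ξ (Nat.unpair t₁).2 Z := by
          constructor
          · rw [hk1, hs1, hl]
          · rw [hk1]; exact hs3
        have : hist ξ Z (t₁+1) = hist ξ Z t₁ ++ [vOf (Nat.unpair t₁).2] := by
          show (if _ then _ else _) = _
          rw [if_pos hcommit]
        rw [this]
        simp [hl]
      · obtain ⟨t, -, ht⟩ := hist_ivt ξ Z t₁ (k+2) hge
        exact ⟨t, ht⟩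
  -- conclude by comparing the strips
  apply Stream'.Seq.ext
  intro k
  apply opt_ext
  intro v
  rw [strip_Urun_some_iff]
  constructor
  · rintro ⟨t, hc, hlen, hval⟩
    have := H1 _ hc.2
    rw [hc.1, hlen, hval] at this
    exact this
  · intro hv
    obtain ⟨T, hT⟩ := hreach k v hv
    obtain ⟨t, -, hlen, hcommit, -⟩ := hist_transition ξ Z T k hT
    have hval := H1 _ hcommit.2
    rw [hcommit.1, hlen, hv] at hval
    have : vOf (Nat.unpair t).2 = v := (Option.some_injective _ hval.symm)
    exact ⟨t, hcommit, hlen, this⟩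

end Run

end KM
namespace KM

/-! ### despite-points and list plumbing -/

lemma despite {γ : Ordinal.{0}} (h1 : 1 ≤ γ) (hcγ : γ.card ≤ Cardinal.aleph0)
    {P : Set ℕ} (hP : P.Finite) :
    ∃ Y : HatBaire, Total Y ∧ ∀ Y' : HatBaire, (∀ j, j ∉ P → Y' j = Y j) → Y' ∉ Dset γ := by
  by_cases h2 : 2 ≤ γ
  · have hfin : ((fun m => (Nat.unpair m).1) '' P).Finite := hP.image _
    obtain ⟨n₀, hn₀⟩ := hfin.infinite_compl.nonempty
    have hE := (Efun_spec h2 hcγ).1 n₀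
    have hwz := wz_spec (Efun γ n₀) hE.1 (card_lt_of_lt hE.2 hcγ)
    refine ⟨fun q => if (Nat.unpair q).1 = n₀ then (wz (Efun γ n₀)).1 (Nat.unpair q).2
      else some 0, ?_, ?_⟩
    · intro q
      dsimp only
      by_cases h : (Nat.unpair q).1 = n₀
      · rw [if_pos h]; exact hwz.1 _
      · rw [if_neg h]; rfl
    · intro Y' hY' hmem
      rw [Dset_big h2 hcγ] at hmem
      apply hmem n₀
      have hblk : proj n₀ Y' = (wz (Efun γ n₀)).1 := by
        funext j
        have hnp : Nat.pair n₀ j ∉ P := by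
          intro hin
          exact hn₀ ⟨Nat.pair n₀ j, hin, by show (Nat.unpair (Nat.pair n₀ j)).1 = n₀; rw [Nat.unpair_pair]⟩
        show Y' (Nat.pair n₀ j) = _
        rw [hY' _ hnp]
        simp [Nat.unpair_pair]
      rw [hblk]
      exact hwz.2.2.1
  · have hγ1 : γ = 1 := by
      rcases lt_or_eq_of_le h1 with h | h
      · exact absurd (two_le_iff_one_lt.mpr h) h2
      · exact h.symm
    subst hγ1
    obtain ⟨j₀, hj₀⟩ := hP.infinite_compl.nonempty
    refine ⟨fun j => if j = j₀ then some 0 else some 1, ?_, ?_⟩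
    · intro j
      dsimp only
      by_cases h : j = j₀
      · rw [if_pos h]; rfl
      · rw [if_neg h]; rfl
    · intro Y' hY' hmem
      rw [Dset_one] at hmem
      refine hmem j₀ ?_
      rw [hY' j₀ hj₀]
      dsimp only
      rw [if_pos rfl]

lemma appH_coord (σ : List Hat) (W : HatBaire) (i : ℕ) :
    appH σ W i = if h : i < σ.length then σ.get ⟨i, h⟩ else W (i - σ.length) := by
  induction σ generalizing i with
  | nil => simp [appH]
  | cons a σ ih =>
    cases i with
    | zero =>
      rw [dif_pos (by simp)]
      rfl
    | succ i =>
      show appH σ W i = _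
      rw [ih]
      by_cases h : i < σ.length
      · rw [dif_pos h, dif_pos (by simpa using Nat.succ_lt_succ h)]
        rfl
      · have hne : ¬ (i + 1 < (a :: σ).length) := by
          simp only [List.length_cons]
          omega
        rw [dif_neg h, dif_neg hne]
        have : i + 1 - (a :: σ).length = i - σ.length := by
          simp only [List.length_cons]
          omega
        rw [this]

lemma appH_append (σ σ' : List Hat) (W : HatBaire) :
    appH (σ ++ σ') W = appH σ (appH σ' W) := by
  induction σ with
  | nil => rfl
  | cons a σ ih =>
    show consH a (appH (σ ++ σ') W) = consH a (appH σ (appH σ' W))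
    rw [ih]

lemma slotIdx_eta (s : ℕ) : slotIdx (kOf s) (vOf s) (nOf s) = s := by
  rw [slotIdx, kOf, vOf, nOf, Nat.pair_unpair, Nat.pair_unpair]

end KM
namespace KM

/-! ### the token encoder -/

/-- the token stream encoding the total point `Yb`. -/
noncomputable def EstrD (Yb : HatBaire) : HatBaire := fun p =>
  if p % 2 = 0 then some (p / 2 + 1) else some ((Yb (p / 2)).getD 0 + 1)

lemma EstrD_even (Yb : HatBaire) {p : ℕ} (hp : p % 2 = 0) :
    EstrD Yb p = some (p / 2 + 1) := if_pos hp

lemma EstrD_odd (Yb : HatBaire) {p : ℕ} (hp : ¬ p % 2 = 0) :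
    EstrD Yb p = some ((Yb (p / 2)).getD 0 + 1) := if_neg hp

lemma total_EstrD (Yb : HatBaire) : Total (EstrD Yb) := by
  intro p
  by_cases hp : p % 2 = 0
  · rw [EstrD_even Yb hp]; rfl
  · rw [EstrD_odd Yb hp]; rfl

/-- the full encoded input: a literal prefix followed by the token stream. -/
noncomputable def thetaFull (l : List Hat) (Yb : HatBaire) : HatBaire :=
  appH l (EstrD Yb)

lemma thetaFull_coord (l : List Hat) (Yb : HatBaire) (i : ℕ) :
    thetaFull l Yb i =
      if h : i < l.length then l.get ⟨i, h⟩ else EstrD Yb (i - l.length) :=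
  appH_coord l (EstrD Yb) i

lemma svals_thetaFull (l : List Hat) (Yb : HatBaire) (p : ℕ) :
    svals (thetaFull l Yb) p =
      if h : p < (l.filterMap id).length then some ((l.filterMap id).get ⟨p, h⟩)
      else EstrD Yb (p - (l.filterMap id).length) := by
  rw [svals, thetaFull, strip_appH]
  by_cases h : p < (l.filterMap id).length
  · rw [dif_pos h, dif_pos h]
  · rw [dif_neg h, dif_neg h, strip_total_get _ (total_EstrD Yb)]

/-- decoding recovers `Yb` at every uncorrupted position. -/
lemma decode_thetaFull (l : List Hat) (i₀ : ℕ)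
    (h2i0 : (l.filterMap id).length = 2 * i₀)
    (Yb : HatBaire) (hYb : Total Yb) (m : ℕ)
    (hm : ∀ (i : ℕ) (h : 2*i < (l.filterMap id).length),
      (l.filterMap id).get ⟨2*i, h⟩ ≠ m + 1) :
    decZ (thetaFull l Yb) m = Yb m := by
  obtain ⟨y, hy⟩ := Option.isSome_iff_exists.mp (hYb m)
  rw [hy]
  show decOut (svals (thetaFull l Yb)) m = some y
  apply decOut_eq_some_iff.mpr
  refine ⟨i₀ + m, ?_, ?_, ?_⟩
  · rw [svals_thetaFull, dif_neg (by omega : ¬ (2*(i₀+m) < (l.filterMap id).length))]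
    have harith : 2*(i₀+m) - (l.filterMap id).length = 2*m := by omega
    rw [harith, EstrD_even Yb (by omega : (2*m) % 2 = 0)]
    have : (2*m)/2 = m := by omega
    rw [this]
  · rw [svals_thetaFull, dif_neg (by omega : ¬ (2*(i₀+m)+1 < (l.filterMap id).length))]
    have harith : 2*(i₀+m)+1 - (l.filterMap id).length = 2*m+1 := by omega
    rw [harith, EstrD_odd Yb (by omega : ¬ (2*m+1) % 2 = 0)]
    have h1 : (2*m+1)/2 = m := by omega
    rw [h1, hy]
    rfl
  · intro i' hi'
    by_cases hlt : i' < i₀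
    · have hb1 : 2*i' < (l.filterMap id).length := by omega
      have hb2 : 2*i'+1 < (l.filterMap id).length := by omega
      constructor
      · refine ⟨(l.filterMap id).get ⟨2*i', hb1⟩, ?_, hm i' hb1⟩
        rw [svals_thetaFull, dif_pos hb1]
      · refine ⟨(l.filterMap id).get ⟨2*i'+1, hb2⟩, ?_⟩
        rw [svals_thetaFull, dif_pos hb2]
    · have hb1 : ¬ (2*i' < (l.filterMap id).length) := by omega
      have hb2 : ¬ (2*i'+1 < (l.filterMap id).length) := by omega
      constructor
      · refine ⟨(2*i' - (l.filterMap id).length)/2 + 1, ?_, ?_⟩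
        · rw [svals_thetaFull, dif_neg hb1,
            EstrD_even Yb (by omega : (2*i' - (l.filterMap id).length) % 2 = 0)]
        · have : (2*i' - (l.filterMap id).length)/2 = i' - i₀ := by omega
          rw [this]
          omega
      · refine ⟨(Yb ((2*i'+1 - (l.filterMap id).length)/2)).getD 0 + 1, ?_⟩
        rw [svals_thetaFull, dif_neg hb2,
          EstrD_odd Yb (by omega : ¬ (2*i'+1 - (l.filterMap id).length) % 2 = 0)]

end KM
namespace KM

lemma combined_reduction {ξ : Ordinal.{0}} (h2 : 2 ≤ ξ) (hc : ξ.card ≤ Cardinal.aleph0)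
    (τ : List Hat) (G : HatBaire → HatBaire) (hG : SigmaMeasurableH ξ G) :
    ∃ θ : HatBaire → HatBaire, Continuous θ ∧ (∀ X, θ X ∈ cylH τ) ∧
      ∀ X, strip (G X) = strip (Urun ξ (θ X)) := by
  classical
  have hξ1 : (1:Ordinal) < ξ := two_le_iff_one_lt.mp h2
  -- padding to even garbage length
  set l : List Hat := if (τ.filterMap id).length % 2 = 0 then τ else τ ++ [some 0] with hldef
  have hlform : ∃ ρ, l = τ ++ ρ := by
    by_cases h : (τ.filterMap id).length % 2 = 0
    · exact ⟨[], by rw [hldef, if_pos h, List.append_nil]⟩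
    · exact ⟨[some 0], by rw [hldef, if_neg h]⟩
  have heven : (l.filterMap id).length % 2 = 0 := by
    by_cases h : (τ.filterMap id).length % 2 = 0
    · rw [hldef, if_pos h]
      exact h
    · rw [hldef, if_neg h, List.filterMap_append]
      have hone : (([some 0] : List Hat).filterMap id).length = 1 := rfl
      rw [List.length_append, hone]
      omega
  set i₀ : ℕ := (l.filterMap id).length / 2 with hi₀
  have h2i0 : (l.filterMap id).length = 2 * i₀ := by omega
  -- corruption sets
  set P : Set ℕ := {m | ∃ i, ∃ h : 2*i < (l.filterMap id).length,
    (l.filterMap id).get ⟨2*i, h⟩ = m+1} with hPdef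
  have hPfin : P.Finite := by
    apply Set.Finite.subset ((l.filterMap id).finite_toSet.image (fun x => x - 1))
    rintro m ⟨i, hh, hget⟩
    refine ⟨(l.filterMap id).get ⟨2*i, hh⟩, List.get_mem _ _, ?_⟩
    rw [List.get_eq_getElem] at hget
    simp only [List.get_eq_getElem, hget]; simp
  set Ps : Set ℕ := (fun m => (Nat.unpair m).1) '' P with hPs
  have hPsfin : Ps.Finite := hPfin.image _
  -- Step A : value events are Σ⁰_ξ
  have hS : ∀ k v, SigmaZero HatBaire ξ (G ⁻¹' {Y | (strip Y).get? k = some v}) := by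
    intro k v
    obtain ⟨C, hCs, hCeq⟩ := open_eq_iUnion_cylH (isOpen_stripGet_some k v)
    have hrw : G ⁻¹' {Y | (strip Y).get? k = some v} = ⋃ n, G ⁻¹' C n := by
      rw [hCeq, Set.preimage_iUnion]
    rw [hrw]
    refine sz_iUnion_nat hξ1 fun n => ?_
    rcases hCs n with h | ⟨σ, h⟩
    · rw [h, Set.preimage_empty]
      exact sz_open isOpen_empty hξ1.le
    · rw [h]
      exact hG σ
  -- Step B : decompose value events into pieces
  have hforms := fun k v => sz_form (hS k v) hξ1
  choose g β hβspec hSeq using hforms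
  -- Step C : hardness reductions for the pieces
  have hhard : ∀ k v n, ∃ θ : HatBaire → HatBaire, Continuous θ ∧ (∀ X, Total (θ X)) ∧
      ∀ X, X ∈ (g k v n)ᶜ ↔ θ X ∉ Dset (β k v n) :=
    fun k v n => hardness (hβspec k v n).2.2 (card_lt_of_lt (hβspec k v n).2.1 hc)
  choose θsub hθc hθt hθcorr using hhard
  -- Step E : slot assignment, avoiding corrupted slots
  have hEx := Efun_spec h2 hc
  have hsel : ∀ k v, ∃ asg : ℕ → ℕ, StrictMono asg ∧
      ∀ n, Efun ξ (asg n) = β k v n ∧ slotIdx k v (asg n) ∉ Ps := by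
    intro k v
    refine exists_strictMono_selection
      (P := fun n m => Efun ξ m = β k v n ∧ slotIdx k v m ∉ Ps) ?_
    intro N n
    have hbadfin : ((fun m => slotIdx k v m) ⁻¹' Ps).Finite := by
      apply Set.Finite.preimage ?_ hPsfin
      intro a _ b _ hab
      have := congrArg (fun s => nOf s) hab
      simpa [nOf_slotIdx] using this
    obtain ⟨b, hb⟩ := hbadfin.bddAbove
    obtain ⟨m, hm1, hm2⟩ := hEx.2 (β k v n) (hβspec k v n).1 (hβspec k v n).2.1 (max N (b+1))
    refine ⟨m, le_trans (le_max_left _ _) hm1, hm2, ?_⟩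
    intro hmem
    have h1 := hb hmem
    have h2' := le_trans (le_max_right N (b+1)) hm1
    omega
  choose asg hasgM hasgS using hsel
  -- Step F : despite points for the unassigned slots
  have hdsp : ∀ s : ℕ, ∃ Y, Total Y ∧
      ∀ Y', (∀ j, j ∉ {j | Nat.pair s j ∈ P} → Y' j = Y j) → Y' ∉ Dset (levOf ξ s) := by
    intro s
    have hE := hEx.1 (nOf s)
    have hPsfin' : ((fun j => Nat.pair s j) ⁻¹' P).Finite := by
      apply Set.Finite.preimage ?_ hPfin
      intro a _ b _ hab
      have := congrArg (fun q => (Nat.unpair q).2) hab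
      simpa [Nat.unpair_pair] using this
    exact despite hE.1 (card_lt_of_lt hE.2 hc) hPsfin'
  choose dspt hdsptT hdsptS using hdsp
  -- slot points
  set sf : HatBaire → ℕ → HatBaire := fun X s =>
    if h : ∃ n, asg (kOf s) (vOf s) n = nOf s then θsub (kOf s) (vOf s) (Classical.choose h) X
    else dspt s with hsf
  have hsfT : ∀ X s, Total (sf X s) := by
    intro X s
    rw [hsf]
    dsimp only
    by_cases h : ∃ n, asg (kOf s) (vOf s) n = nOf s
    · rw [dif_pos h]; exact hθt _ _ _ X
    · rw [dif_neg h]; exact hdsptT s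
  set θ : HatBaire → HatBaire := fun X => thetaFull l (combine (sf X)) with hθ
  have hYbT : ∀ X, Total (combine (sf X)) := fun X => total_combine (hsfT X)
  -- decoding facts
  have hdecP : ∀ X m, m ∉ P → decZ (θ X) m = combine (sf X) m := by
    intro X m hmP
    rw [hθ]
    dsimp only
    apply decode_thetaFull l i₀ h2i0 _ (hYbT X)
    intro i hh hget
    exact hmP ⟨i, hh, hget⟩
  have hblk : ∀ X s, s ∉ Ps → (fun j => decZ (θ X) (Nat.pair s j)) = sf X s := by
    intro X s hs
    funext j
    have hmP : Nat.pair s j ∉ P := by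
      intro hin
      exact hs ⟨Nat.pair s j, hin, by
        show (Nat.unpair (Nat.pair s j)).1 = s
        rw [Nat.unpair_pair]⟩
    rw [hdecP X _ hmP]
    show sf X (Nat.unpair (Nat.pair s j)).1 (Nat.unpair (Nat.pair s j)).2 = sf X s j
    rw [Nat.unpair_pair]
  have hblockA : ∀ X k v n, InSet ξ (slotIdx k v (asg k v n)) (θ X) ↔ X ∈ g k v n := by
    intro X k v n
    have hk := kOf_slotIdx k v (asg k v n)
    have hv := vOf_slotIdx k v (asg k v n)
    have hn := nOf_slotIdx k v (asg k v n)
    have hnotPs : slotIdx k v (asg k v n) ∉ Ps := (hasgS k v n).2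
    have hsfval : sf X (slotIdx k v (asg k v n)) = θsub k v n X := by
      rw [hsf]
      dsimp only
      have hcond : ∃ n', asg (kOf (slotIdx k v (asg k v n))) (vOf (slotIdx k v (asg k v n))) n'
          = nOf (slotIdx k v (asg k v n)) := ⟨n, by rw [hk, hv, hn]⟩
      rw [dif_pos hcond]
      have hspec := Classical.choose_spec hcond
      set n₀ := Classical.choose hcond with hn₀def
      rw [hk, hv, hn] at hspec
      have hchoose : n₀ = n := (hasgM k v).injective hspec
      rw [hk, hv, hchoose]
    unfold InSet
    rw [hblk X _ hnotPs, hsfval]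
    have hlev : levOf ξ (slotIdx k v (asg k v n)) = β k v n := by
      rw [levOf, hn, (hasgS k v n).1]
    rw [hlev]
    constructor
    · intro hmem
      by_contra hng
      exact (hθcorr k v n X).mp hng hmem
    · intro hg
      by_contra hnot
      exact ((hθcorr k v n X).mpr hnot) hg
  have hblockU : ∀ X s, ¬ (∃ n, asg (kOf s) (vOf s) n = nOf s) → ¬ InSet ξ s (θ X) := by
    intro X s hna hmem
    unfold InSet at hmem
    refine hdsptS s (fun j => decZ (θ X) (Nat.pair s j)) ?_ hmem
    intro j hj
    show decZ (θ X) (Nat.pair s j) = dspt s j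
    rw [hdecP X _ hj]
    show sf X (Nat.unpair (Nat.pair s j)).1 (Nat.unpair (Nat.pair s j)).2 = dspt s j
    rw [Nat.unpair_pair]
    rw [hsf]
    dsimp only
    rw [dif_neg hna]
  -- conclude
  refine ⟨θ, ?_, ?_, ?_⟩
  · rw [hθ]
    apply continuous_pi
    intro i
    have hco : (fun X => thetaFull l (combine (sf X)) i) = fun X =>
        (if h : i < l.length then l.get ⟨i, h⟩
          else EstrD (combine (sf X)) (i - l.length)) := by
      funext X
      exact thetaFull_coord l _ i
    rw [hco]
    by_cases h : i < l.length
    · simp only [dif_pos h]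
      exact continuous_const
    · simp only [dif_neg h]
      by_cases hp : (i - l.length) % 2 = 0
      · have hrw : (fun X => EstrD (combine (sf X)) (i - l.length)) =
            fun _ => some ((i - l.length)/2 + 1) := by
          funext X
          exact EstrD_even _ hp
        rw [hrw]
        exact continuous_const
      · have hrw : (fun X => EstrD (combine (sf X)) (i - l.length)) =
            fun X => some ((sf X (Nat.unpair ((i - l.length)/2)).1
              (Nat.unpair ((i - l.length)/2)).2).getD 0 + 1) := by
          funext X
          rw [EstrD_odd _ hp]
          rfl
        rw [hrw]
        set s := (Nat.unpair ((i - l.length)/2)).1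
        set j := (Nat.unpair ((i - l.length)/2)).2
        by_cases ha : ∃ n, asg (kOf s) (vOf s) n = nOf s
        · have hrw2 : (fun X => some ((sf X s j).getD 0 + 1)) =
              (fun a : Hat => some (a.getD 0 + 1)) ∘
                (fun X => θsub (kOf s) (vOf s) (Classical.choose ha) X j) := by
            funext X
            simp only [Function.comp, hsf]
            rw [dif_pos ha]
          rw [hrw2]
          exact continuous_of_discreteTopology.comp ((continuous_apply j).comp (hθc _ _ _))
        · have hrw2 : (fun X => some ((sf X s j).getD 0 + 1)) =
              fun _ => some ((dspt s j).getD 0 + 1) := by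
            funext X
            simp only [hsf]
            rw [dif_neg ha]
          rw [hrw2]
          exact continuous_const
  · intro X
    obtain ⟨ρ, hρ⟩ := hlform
    rw [hθ]
    dsimp only
    rw [thetaFull, hρ, appH_append]
    exact appH_mem_cylH τ _
  · intro X
    refine (run_correct ?_ ?_).symm
    · intro s hins
      by_cases ha : ∃ n, asg (kOf s) (vOf s) n = nOf s
      · obtain ⟨n, hn⟩ := ha
        have hseq : s = slotIdx (kOf s) (vOf s) (asg (kOf s) (vOf s) n) := by
          rw [hn, slotIdx_eta]
        rw [hseq] at hins
        have hxg := (hblockA X (kOf s) (vOf s) n).mp hins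
        have hxS : X ∈ G ⁻¹' {Y | (strip Y).get? (kOf s) = some (vOf s)} := by
          rw [hSeq (kOf s) (vOf s)]
          exact Set.mem_iUnion.mpr ⟨n, hxg⟩
        exact hxS
      · exact absurd hins (hblockU X s ha)
    · intro k v hkv
      have hxS : X ∈ G ⁻¹' {Y | (strip Y).get? k = some v} := hkv
      rw [hSeq k v] at hxS
      obtain ⟨n, hn⟩ := Set.mem_iUnion.mp hxS
      exact ⟨slotIdx k v (asg k v n), kOf_slotIdx _ _ _, vOf_slotIdx _ _ _,
        (hblockA X k v n).mpr hn⟩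

end KM
/-- For every countable ordinal `α` there is a conciliatory function
`U : ω̂^ω → ω̂^ω` that is simultaneously `Σ⁰_{1+ω^α}`-universal and initializable. -/
theorem exists_transfinite_universal_initializable (α : Ordinal.{0}) (hα : IsCountableOrd α) :
    ∃ U : HatBaire → HatBaire,
      ConciliatoryF U ∧ SigmaUniversal (1 + Ordinal.omega0 ^ α) U ∧ InitializableH U := by
  have h2 : 2 ≤ 1 + Ordinal.omega0 ^ α := KM.two_le_xi α
  have hc : (1 + Ordinal.omega0 ^ α).card ≤ Cardinal.aleph0 := KM.card_xi_le hα
  refine ⟨KM.Urun (1 + Ordinal.omega0 ^ α), KM.conciliatory_Urun _,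
    ⟨KM.sigmaMeasurable_Urun h2 hc, ?_⟩, ?_⟩
  · intro G _ hGm
    obtain ⟨θ, hθc, -, hθeq⟩ := KM.combined_reduction h2 hc [] G hGm
    exact ⟨θ, hθc, fun X => hθeq X⟩
  · intro τ
    obtain ⟨θ, hθc, hθmem, hθeq⟩ :=
      KM.combined_reduction h2 hc τ _ (KM.sigmaMeasurable_Urun h2 hc)
    exact ⟨θ, hθc, hθmem, fun X => hθeq X⟩

end WadgeStudy
end
end
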